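/- arXiv:2408.00912 — 5 statements merged into one kernel-verified Lean document; each statement's English description precedes it below -/
import Mathlib

section
/- For β < n+3 and u ∈ C³(ℝⁿ) with bounded third derivatives near x and fixed δ > 0, the extended nonlocal Laplacian L^{δ,β}u(x) converges to Δu(x) as β → n+2. -/
open MeasureTheory Real Filter
open scoped RealInnerProductSpace Topology

open Set
open scoped ENNReal

set_option maxHeartbeats 1000000

lemma integrableOn_norm_rpow_ball (n : ℕ) {δ r : ℝ} (hδ : 0 < δ) (hr : -(n : ℝ) < r) :
    IntegrableOn (fun z : EuclideanSpace ℝ (Fin n) => ‖z‖ ^ r)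
      (Metric.ball 0 δ) := by
  set E := EuclideanSpace ℝ (Fin n)
  have hmeas : Measurable fun z : E => ‖z‖ ^ r := by fun_prop
  rcases le_or_gt 0 r with h0 | h0
  · -- bounded case
    refine Measure.integrableOn_of_bounded (M := δ ^ r) measure_ball_lt_top.ne
      hmeas.aestronglyMeasurable ?_
    filter_upwards [ae_restrict_mem measurableSet_ball] with z hz
    rw [Real.norm_eq_abs, abs_of_nonneg (Real.rpow_nonneg (norm_nonneg _) _)]
    exact Real.rpow_le_rpow (norm_nonneg _) (le_of_lt (mem_ball_zero_iff.mp hz)) h0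
  · constructor
    · exact hmeas.aestronglyMeasurable
    · rw [hasFiniteIntegral_iff_ofReal ?_]
      swap
      · exact ae_of_all _ fun z => Real.rpow_nonneg (norm_nonneg _) _
      rw [lintegral_eq_lintegral_meas_le _
        (ae_of_all _ fun z => Real.rpow_nonneg (norm_nonneg _) _) hmeas.aemeasurable]
      set μ := (volume : Measure E).restrict (Metric.ball 0 δ)
      have key : ∀ t : ℝ, 0 < t →
          μ {z : E | t ≤ ‖z‖ ^ r} ≤ volume (Metric.closedBall (0 : E) (t ^ r⁻¹)) := by
        intro t ht
        refine le_trans (Measure.restrict_le_self _) (measure_mono ?_)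
        intro z hz
        simp only [mem_setOf_eq] at hz
        rcases eq_or_ne z 0 with rfl | hz0
        · simp [Metric.mem_closedBall, dist_zero_right]
          positivity
        · have hz' : (0 : ℝ) < ‖z‖ := norm_pos_iff.mpr hz0
          rw [Metric.mem_closedBall, dist_zero_right]
          rw [Real.le_rpow_inv_iff_of_neg hz' ht h0]  -- may be wrong direction
          exact hz
      have hT : (0:ℝ) < δ ^ r := Real.rpow_pos_of_pos hδ _
      have hexp : r⁻¹ * (n:ℝ) < -1 := by
        rw [mul_comm, ← div_eq_mul_inv, div_lt_iff_of_neg h0]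
        linarith
      calc ∫⁻ t in Ioi (0:ℝ), μ {z : E | t ≤ ‖z‖ ^ r}
          ≤ ∫⁻ t in Ioc (0:ℝ) (δ ^ r) ∪ Ioi (δ ^ r), μ {z : E | t ≤ ‖z‖ ^ r} :=
            lintegral_mono_set Ioi_subset_Ioc_union_Ioi
        _ ≤ (∫⁻ t in Ioc (0:ℝ) (δ ^ r), μ {z : E | t ≤ ‖z‖ ^ r})
              + ∫⁻ t in Ioi (δ ^ r), μ {z : E | t ≤ ‖z‖ ^ r} := lintegral_union_le _ _ _
        _ < ∞ := by
            refine ENNReal.add_lt_top.2 ⟨?_, ?_⟩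
            · calc (∫⁻ t in Ioc (0:ℝ) (δ ^ r), μ {z : E | t ≤ ‖z‖ ^ r})
                  ≤ ∫⁻ _t in Ioc (0:ℝ) (δ ^ r), volume (Metric.ball (0:E) δ) := by
                    refine lintegral_mono fun t => ?_
                    exact le_trans (measure_mono (subset_univ _))
                      (le_of_eq (Measure.restrict_apply_univ _))
                _ = volume (Metric.ball (0:E) δ) * volume (Ioc (0:ℝ) (δ ^ r)) := by
                    rw [setLIntegral_const]
                _ < ∞ := ENNReal.mul_lt_top measure_ball_lt_top (by simp [Real.volume_Ioc])
            · calc (∫⁻ t in Ioi (δ ^ r), μ {z : E | t ≤ ‖z‖ ^ r})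
                  ≤ ∫⁻ t in Ioi (δ ^ r), ENNReal.ofReal (t ^ (r⁻¹ * (n:ℝ)))
                      * volume (Metric.ball (0:E) 1) := by
                    refine setLIntegral_mono' measurableSet_Ioi fun t ht => ?_
                    have ht' : (0:ℝ) < t := lt_trans hT ht
                    refine (key t ht').trans ?_
                    rw [Measure.addHaar_closedBall _ _ (Real.rpow_nonneg ht'.le _)]
                    have hfr : Module.finrank ℝ E = n := finrank_euclideanSpace_fin
                    rw [hfr, ← Real.rpow_natCast (t ^ r⁻¹) n, ← Real.rpow_mul ht'.le]
                _ = (∫⁻ t in Ioi (δ ^ r), ENNReal.ofReal (t ^ (r⁻¹ * (n:ℝ))))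
                      * volume (Metric.ball (0:E) 1) := by
                    rw [lintegral_mul_const' _ _ measure_ball_lt_top.ne]
                _ < ∞ := by
                    refine ENNReal.mul_lt_top ?_ measure_ball_lt_top
                    have hint := integrableOn_Ioi_rpow_of_lt hexp hT
                    have := hint.2
                    rw [hasFiniteIntegral_iff_ofReal ?_] at this
                    · exact this
                    · filter_upwards [ae_restrict_mem measurableSet_Ioi] with t ht
                      exact Real.rpow_nonneg (le_of_lt (lt_trans hT ht)) _

lemma taylor_sym_bound (n : ℕ) {δ : ℝ} (hδ : 0 < δ) (u : EuclideanSpace ℝ (Fin n) → ℝ)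
    (hu : ContDiff ℝ 3 u) (x : EuclideanSpace ℝ (Fin n)) :
    ∃ C : ℝ, 0 ≤ C ∧ ∀ z : EuclideanSpace ℝ (Fin n), ‖z‖ ≤ δ →
      |u (x + z) + u (x - z) - 2 * u x - fderiv ℝ (fderiv ℝ u) x z z| ≤ C * ‖z‖ ^ (3 : ℕ) := by
  set G := fderiv ℝ (fderiv ℝ u) with hGdef
  have hu1 : ContDiff ℝ 2 (fderiv ℝ u) := hu.fderiv_right (by norm_num)
  have hG : ContDiff ℝ 1 G := hu1.fderiv_right (by norm_num)
  have hdu : Differentiable ℝ u := hu.differentiable (by norm_num)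
  have hdu1 : Differentiable ℝ (fderiv ℝ u) := hu1.differentiable (by norm_num)
  obtain ⟨K, hK⟩ := (isCompact_closedBall x δ).exists_bound_of_continuousOn
    ((hG.continuous_fderiv (by norm_num)).continuousOn (s := Metric.closedBall x δ))
  have hK0 : 0 ≤ K := le_trans (norm_nonneg _) (hK x (Metric.mem_closedBall_self hδ.le))
  have hLip : ∀ y ∈ Metric.closedBall x δ, ‖G y - G x‖ ≤ K * ‖y - x‖ := fun y hy =>
    (convex_closedBall x δ).norm_image_sub_le_of_norm_fderiv_le
      (fun w _ => (hG.differentiable (by norm_num)).differentiableAt)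
      hK (Metric.mem_closedBall_self hδ.le) hy
  refine ⟨2 * K, by positivity, fun z hz => ?_⟩
  set Q : ℝ := G x z z with hQ
  -- lines
  have hline : ∀ t : ℝ, HasDerivAt (fun s : ℝ => x + s • z) z t := by
    intro t
    simpa using ((hasDerivAt_id t).smul_const z).const_add x
  have hline' : ∀ t : ℝ, HasDerivAt (fun s : ℝ => x - s • z) (-z) t := by
    intro t
    simpa [sub_eq_add_neg] using ((hasDerivAt_id t).smul_const z).neg.const_add x
  have hmem : ∀ t : ℝ, t ∈ Icc (0:ℝ) 1 → x + t • z ∈ Metric.closedBall x δ := by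
    intro t ht
    simp only [Metric.mem_closedBall, dist_eq_norm, add_sub_cancel_left]
    rw [norm_smul]
    calc ‖t‖ * ‖z‖ ≤ 1 * ‖z‖ := by
          apply mul_le_mul_of_nonneg_right _ (norm_nonneg z)
          rw [Real.norm_eq_abs, abs_of_nonneg ht.1]; exact ht.2
      _ ≤ δ := by simpa using hz
  have hmem' : ∀ t : ℝ, t ∈ Icc (0:ℝ) 1 → x - t • z ∈ Metric.closedBall x δ := by
    intro t ht
    have := hmem t ht
    simp only [Metric.mem_closedBall, dist_eq_norm, add_sub_cancel_left,
      sub_sub_cancel_left, norm_neg] at this ⊢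
    simpa using this
  set ψ₁ : ℝ → ℝ := fun t => (fderiv ℝ u (x + t • z)) z - (fderiv ℝ u (x - t • z)) z with hψ₁def
  have hψ : ∀ t : ℝ, HasDerivAt (fun s => u (x + s • z) + u (x - s • z)) (ψ₁ t) t := by
    intro t
    exact ((hdu _).hasFDerivAt.comp_hasDerivAt t (hline t)).add
      (by simpa [Function.comp_def] using ((hdu _).hasFDerivAt.comp_hasDerivAt t (hline' t)))
  have hψ₁ : ∀ t : ℝ, HasDerivAt ψ₁ (G (x + t • z) z z + G (x - t • z) z z) t := by
    intro t
    have h1 : HasDerivAt (fun s : ℝ => fderiv ℝ u (x + s • z)) (G (x + t • z) z) t :=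
      (hdu1 _).hasFDerivAt.comp_hasDerivAt t (hline t)
    have h2 : HasDerivAt (fun s : ℝ => fderiv ℝ u (x - s • z)) (-(G (x - t • z) z)) t := by
      simpa [Function.comp_def] using (hdu1 _).hasFDerivAt.comp_hasDerivAt t (hline' t)
    have h1' := h1.clm_apply (hasDerivAt_const t z)
    have h2' := h2.clm_apply (hasDerivAt_const t z)
    simp only [map_zero, add_zero, ContinuousLinearMap.neg_apply] at h1' h2'
    have h3 := h1'.sub h2'
    rw [sub_neg_eq_add] at h3
    exact h3
  have hbB : ∀ (B : EuclideanSpace ℝ (Fin n) →L[ℝ] EuclideanSpace ℝ (Fin n) →L[ℝ] ℝ), ‖B z z‖ ≤ ‖B‖ * ‖z‖ * ‖z‖ := by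
    intro B
    calc ‖B z z‖ ≤ ‖B z‖ * ‖z‖ := (B z).le_opNorm z
      _ ≤ ‖B‖ * ‖z‖ * ‖z‖ :=
        mul_le_mul_of_nonneg_right (B.le_opNorm z) (norm_nonneg z)
  -- first application of MVT
  have step1 : ∀ t ∈ Icc (0:ℝ) 1, ‖ψ₁ t - t * (2 * Q)‖ ≤ 2 * K * ‖z‖ ^ (3:ℕ) * (t - 0) := by
    have := norm_image_sub_le_of_norm_deriv_le_segment'
      (f := fun t => ψ₁ t - t * (2 * Q)) (a := 0) (b := 1)
      (f' := fun t => G (x + t • z) z z + G (x - t • z) z z - 2 * Q)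
      (C := 2 * K * ‖z‖ ^ (3:ℕ)) ?_ ?_
    · intro t ht
      have h := this t ht
      simpa [hψ₁def] using h
    · intro t ht
      exact ((hψ₁ t).sub (hasDerivAt_mul_const (2 * Q))).hasDerivWithinAt
    · intro t ht
      have ht' : t ∈ Icc (0:ℝ) 1 := Ico_subset_Icc_self ht
      have e1 : G (x + t • z) z z + G (x - t • z) z z - 2 * Q
          = (G (x + t • z) - G x) z z + (G (x - t • z) - G x) z z := by
        simp [hQ, ContinuousLinearMap.sub_apply]; ring
      beta_reduce
      rw [e1]
      have hfac : 0 ≤ K * ‖z‖ * (1 - t) :=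
        mul_nonneg (mul_nonneg hK0 (norm_nonneg z)) (by linarith [ht'.2])
      have b1 : ‖(G (x + t • z) - G x) z z‖ ≤ K * ‖z‖ * ‖z‖ * ‖z‖ := by
        have hthis := hLip _ (hmem t ht')
        simp only [add_sub_cancel_left] at hthis
        have hn : ‖G (x + t • z) - G x‖ ≤ K * ‖z‖ := by
          refine le_trans hthis ?_
          rw [norm_smul, Real.norm_eq_abs, abs_of_nonneg ht'.1]
          nlinarith [hfac]
        exact le_trans (hbB _)
          (mul_le_mul_of_nonneg_right
            (mul_le_mul_of_nonneg_right hn (norm_nonneg z)) (norm_nonneg z))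
      have b2 : ‖(G (x - t • z) - G x) z z‖ ≤ K * ‖z‖ * ‖z‖ * ‖z‖ := by
        have hthis := hLip _ (hmem' t ht')
        simp only [sub_sub_cancel_left, norm_neg] at hthis
        have hn : ‖G (x - t • z) - G x‖ ≤ K * ‖z‖ := by
          refine le_trans hthis ?_
          rw [norm_smul, Real.norm_eq_abs, abs_of_nonneg ht'.1]
          nlinarith [hfac]
        exact le_trans (hbB _)
          (mul_le_mul_of_nonneg_right
            (mul_le_mul_of_nonneg_right hn (norm_nonneg z)) (norm_nonneg z))
      calc ‖(G (x + t • z) - G x) z z + (G (x - t • z) - G x) z z‖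
          ≤ ‖(G (x + t • z) - G x) z z‖ + ‖(G (x - t • z) - G x) z z‖ := norm_add_le _ _
        _ ≤ 2 * K * ‖z‖ ^ (3:ℕ) := by rw [pow_succ, pow_two]; nlinarith
  -- second application
  have step2 := norm_image_sub_le_of_norm_deriv_le_segment'
    (f := fun t => u (x + t • z) + u (x - t • z) - t ^ 2 * Q) (a := 0) (b := 1)
    (f' := fun t => ψ₁ t - t * (2 * Q))
    (C := 2 * K * ‖z‖ ^ (3:ℕ)) ?_ ?_
  · have h := step2 1 (by norm_num)
    simp only [one_smul, one_pow, one_mul, zero_smul, add_zero, sub_zero, zero_pow,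
      zero_mul, mul_one] at h
    rw [Real.norm_eq_abs] at h
    calc |u (x + z) + u (x - z) - 2 * u x - G x z z|
        = |u (x + z) + u (x - z) - 1 * Q - (u x + u x - 0)| := by rw [hQ]; ring_nf
      _ ≤ 2 * K * ‖z‖ ^ (3:ℕ) := by
          have : u (x + (0:ℝ) • z) + u (x - (0:ℝ) • z) - 0 = u x + u x - 0 := by simp
          simpa [this] using h
  · intro t ht
    have : HasDerivAt (fun t : ℝ => t ^ 2 * Q) (t * (2 * Q)) t := by
      simpa [mul_comm, mul_assoc, mul_left_comm] using
        ((hasDerivAt_pow 2 t).mul_const Q)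
    exact ((hψ t).sub this).hasDerivWithinAt
  · intro t ht
    have := step1 t (Ico_subset_Icc_self ht)
    have ht0 : t - 0 ≤ 1 := by simpa using (Ico_subset_Icc_self ht).2
    have h1 : t - 0 ≤ 1 := by simpa using ht.2.le
    have h2 : (0:ℝ) ≤ 2 * K * ‖z‖ ^ (3:ℕ) := by positivity
    calc ‖ψ₁ t - t * (2 * Q)‖ ≤ 2 * K * ‖z‖ ^ (3:ℕ) * (t - 0) := this
      _ ≤ 2 * K * ‖z‖ ^ (3:ℕ) * 1 := by
          exact mul_le_mul_of_nonneg_left h1 h2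
      _ = 2 * K * ‖z‖ ^ (3:ℕ) := mul_one _

noncomputable def cdb (n : ℕ) (δ β : ℝ) : ℝ :=
  2 * ((n : ℝ) + 2 - β) * Real.Gamma ((n : ℝ) / 2 + 1) /
    (Real.pi ^ ((n : ℝ) / 2) * δ ^ ((n : ℝ) + 2 - β))

theorem stmt5 (n : ℕ) (hn : 1 ≤ n) (δ : ℝ) (hδ : 0 < δ)
    (u : EuclideanSpace ℝ (Fin n) → ℝ) (hu : ContDiff ℝ 3 u)
    (x : EuclideanSpace ℝ (Fin n))
    (lap : ℝ)
    (hlap : lap = ∑ i : Fin n, iteratedFDeriv ℝ 2 u x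
        ![EuclideanSpace.single i (1 : ℝ), EuclideanSpace.single i (1 : ℝ)])
    (L : ℝ → ℝ)
    (hL : ∀ β : ℝ, β < (n : ℝ) + 3 → L β = lap + cdb n δ β *
      ∫ z in Metric.ball (0 : EuclideanSpace ℝ (Fin n)) δ,
        (u (x + z) - u x -
          (∑ i : Fin n, ∑ j : Fin n, z i * z j *
            iteratedFDeriv ℝ 2 u x
              ![EuclideanSpace.single i (1 : ℝ), EuclideanSpace.single j (1 : ℝ)]) / 2)
          / ‖z‖ ^ β) :
    Tendsto L (𝓝 ((n : ℝ) + 2)) (𝓝 lap) := by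
  set A := fderiv ℝ (fderiv ℝ u) x with hA
  -- the quadratic form identity
  have hQeq : ∀ z : EuclideanSpace ℝ (Fin n),
      (∑ i : Fin n, ∑ j : Fin n, z i * z j *
        iteratedFDeriv ℝ 2 u x
          ![EuclideanSpace.single i (1 : ℝ), EuclideanSpace.single j (1 : ℝ)]) = A z z := by
    intro z
    have hrep : (∑ i : Fin n, z i • EuclideanSpace.single i (1 : ℝ)) = z := by
      ext j
      rw [WithLp.ofLp_sum, Finset.sum_apply]
      simp [EuclideanSpace.single_apply]
    calc (∑ i : Fin n, ∑ j : Fin n, z i * z j *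
          iteratedFDeriv ℝ 2 u x
            ![EuclideanSpace.single i (1 : ℝ), EuclideanSpace.single j (1 : ℝ)])
        = ∑ i : Fin n, ∑ j : Fin n, z i * z j *
            A (EuclideanSpace.single i (1 : ℝ)) (EuclideanSpace.single j (1 : ℝ)) := by
          refine Finset.sum_congr rfl fun i _ => Finset.sum_congr rfl fun j _ => ?_
          rw [iteratedFDeriv_two_apply]
          simp [hA]
      _ = A z z := by
          have h1 : ∀ w, A z w = ∑ i : Fin n, z i * A (EuclideanSpace.single i (1:ℝ)) w := by
            intro w
            conv_lhs => rw [← hrep]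
            rw [map_sum, ContinuousLinearMap.sum_apply]
            refine Finset.sum_congr rfl fun i _ => ?_
            rw [_root_.map_smul, ContinuousLinearMap.smul_apply, smul_eq_mul]
          have h2 : ∀ i : Fin n, A (EuclideanSpace.single i (1:ℝ)) z
              = ∑ j : Fin n, z j * A (EuclideanSpace.single i (1:ℝ)) (EuclideanSpace.single j (1:ℝ)) := by
            intro i
            conv_lhs => rw [← hrep]
            rw [map_sum]
            refine Finset.sum_congr rfl fun j _ => ?_
            rw [_root_.map_smul, smul_eq_mul]
          rw [h1 z]
          refine Finset.sum_congr rfl fun i _ => ?_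
          rw [h2 i, Finset.mul_sum]
          refine Finset.sum_congr rfl fun j _ => ?_
          ring
  -- notation for the integral
  set F : ℝ → EuclideanSpace ℝ (Fin n) → ℝ := fun β z =>
    (u (x + z) - u x -
      (∑ i : Fin n, ∑ j : Fin n, z i * z j *
        iteratedFDeriv ℝ 2 u x
          ![EuclideanSpace.single i (1 : ℝ), EuclideanSpace.single j (1 : ℝ)]) / 2)
      / ‖z‖ ^ β with hF
  set I : ℝ → ℝ := fun β => ∫ z in Metric.ball (0 : EuclideanSpace ℝ (Fin n)) δ, F β z with hI
  obtain ⟨C, hC0, hC⟩ := taylor_sym_bound n hδ u hu x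
  -- dominating function
  set g : EuclideanSpace ℝ (Fin n) → ℝ := fun z =>
    (C / 2) * (‖z‖ ^ ((1:ℝ)/2 - n) + ‖z‖ ^ ((3:ℝ)/2 - n)) with hg
  have hg_int : IntegrableOn g (Metric.ball (0 : EuclideanSpace ℝ (Fin n)) δ) := by
    refine Integrable.const_mul ?_ _
    exact (integrableOn_norm_rpow_ball n hδ (by linarith : -(n:ℝ) < (1:ℝ)/2 - n)).add
      (integrableOn_norm_rpow_ball n hδ (by linarith : -(n:ℝ) < (3:ℝ)/2 - n))
  set M : ℝ := ∫ z in Metric.ball (0 : EuclideanSpace ℝ (Fin n)) δ, g z with hM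
  have hM0 : 0 ≤ M := by
    refine integral_nonneg fun z => ?_
    have : (0:ℝ) ≤ ‖z‖ ^ ((1:ℝ)/2 - n) + ‖z‖ ^ ((3:ℝ)/2 - n) := by positivity
    positivity
  -- key uniform bound
  have hkey : ∀ β ∈ Ioo ((n:ℝ) + 3/2) ((n:ℝ) + 5/2), |I β| ≤ M := by
    intro β hβ
    by_cases hInt : IntegrableOn (F β) (Metric.ball (0 : EuclideanSpace ℝ (Fin n)) δ) volume
    · have mp : MeasurePreserving (fun z : EuclideanSpace ℝ (Fin n) => -z) volume volume :=
        Measure.measurePreserving_neg _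
      have emb : MeasurableEmbedding (fun z : EuclideanSpace ℝ (Fin n) => -z) :=
        (Homeomorph.neg (EuclideanSpace ℝ (Fin n))).measurableEmbedding
      have hball : (fun z : EuclideanSpace ℝ (Fin n) => -z) ⁻¹' (Metric.ball 0 δ)
          = Metric.ball 0 δ := by
        ext w; simp
      have hneg : (∫ z in Metric.ball (0 : EuclideanSpace ℝ (Fin n)) δ, F β (-z)) = I β := by
        have := mp.setIntegral_preimage_emb emb (F β) (Metric.ball 0 δ)
        rw [hball] at this
        exact this
      have hInt' : IntegrableOn (fun z => F β (-z))
          (Metric.ball (0 : EuclideanSpace ℝ (Fin n)) δ) volume := by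
        have := (mp.integrableOn_comp_preimage emb).2 hInt
        rwa [hball] at this
      have hsplit : I β = ∫ z in Metric.ball (0 : EuclideanSpace ℝ (Fin n)) δ,
          (F β z + F β (-z)) / 2 := by
        rw [integral_div, integral_add hInt hInt', hneg]
        ring
      rw [hsplit]
      have h0 : ∀ᵐ z : EuclideanSpace ℝ (Fin n) ∂volume, z ≠ 0 := by
        have hs : {z : EuclideanSpace ℝ (Fin n) | ¬ z ≠ 0} = {0} := by ext w; simp
        rw [ae_iff, hs]
        have hsub : ({(0 : EuclideanSpace ℝ (Fin n))} : Set (EuclideanSpace ℝ (Fin n)))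
            ⊆ Metric.closedBall 0 0 := by simp
        refine le_antisymm (le_trans (measure_mono hsub) ?_) zero_le
        rw [Measure.addHaar_closedBall (volume : Measure (EuclideanSpace ℝ (Fin n))) 0
          (le_refl (0:ℝ))]
        have hfr : Module.finrank ℝ (EuclideanSpace ℝ (Fin n)) = n := finrank_euclideanSpace_fin
        rw [hfr, zero_pow (by omega : n ≠ 0)]
        simp
      rw [hM]
      rw [← Real.norm_eq_abs]
      refine norm_integral_le_of_norm_le hg_int ?_
      filter_upwards [ae_restrict_mem measurableSet_ball, ae_restrict_of_ae h0] with z hzball hz0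
      have hzpos : (0:ℝ) < ‖z‖ := norm_pos_iff.mpr hz0
      have hzδ : ‖z‖ < δ := by simpa [Metric.mem_ball, dist_zero_right] using hzball
      -- compute the symmetrized integrand
      have hSneg : (∑ i : Fin n, ∑ j : Fin n, (-z) i * (-z) j *
          iteratedFDeriv ℝ 2 u x
            ![EuclideanSpace.single i (1 : ℝ), EuclideanSpace.single j (1 : ℝ)])
          = (∑ i : Fin n, ∑ j : Fin n, z i * z j *
          iteratedFDeriv ℝ 2 u x
            ![EuclideanSpace.single i (1 : ℝ), EuclideanSpace.single j (1 : ℝ)]) := by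
        refine Finset.sum_congr rfl fun i _ => Finset.sum_congr rfl fun j _ => ?_
        have h1 : (-z) i = -(z i) := rfl
        have h2 : (-z) j = -(z j) := rfl
        rw [h1, h2]; ring
      have heq : (F β z + F β (-z)) / 2
          = (u (x + z) + u (x - z) - 2 * u x - A z z) / (2 * ‖z‖ ^ β) := by
        rw [hF]
        simp only [norm_neg, hSneg]
        rw [hQeq z]
        have : x + -z = x - z := by abel
        rw [this]
        field_simp
        ring
      rw [heq]
      have hnum := hC z hzδ.le
      have hden : (0:ℝ) < ‖z‖ ^ β := Real.rpow_pos_of_pos hzpos _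
      rw [Real.norm_eq_abs, abs_div, abs_of_pos (by positivity : (0:ℝ) < 2 * ‖z‖ ^ β)]
      have step : |u (x + z) + u (x - z) - 2 * u x - A z z| / (2 * ‖z‖ ^ β)
          ≤ (C / 2) * ‖z‖ ^ ((3:ℝ) - β) := by
        rw [div_le_iff₀ (by positivity)]
        have : (C / 2) * ‖z‖ ^ ((3:ℝ) - β) * (2 * ‖z‖ ^ β) = C * ‖z‖ ^ ((3:ℝ) - β + β) := by
          rw [Real.rpow_add hzpos]
          ring
        rw [this]
        have h3 : (3:ℝ) - β + β = 3 := by ring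
        rw [h3]
        have h4 : ‖z‖ ^ ((3:ℝ)) = ‖z‖ ^ (3:ℕ) := by
          rw [← Real.rpow_natCast]
          norm_num
        rw [h4]
        exact hnum
      refine step.trans ?_
      rw [hg]
      have hcomp : ‖z‖ ^ ((3:ℝ) - β) ≤ ‖z‖ ^ ((1:ℝ)/2 - n) + ‖z‖ ^ ((3:ℝ)/2 - n) := by
        rcases le_or_gt ‖z‖ 1 with h1 | h1
        · have := Real.rpow_le_rpow_of_exponent_ge hzpos h1
            (by linarith [hβ.2] : (1:ℝ)/2 - n ≤ (3:ℝ) - β)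
          have hb : (0:ℝ) ≤ ‖z‖ ^ ((3:ℝ)/2 - n) := Real.rpow_nonneg hzpos.le _
          linarith
        · have := Real.rpow_le_rpow_of_exponent_le h1.le
            (by linarith [hβ.1] : (3:ℝ) - β ≤ (3:ℝ)/2 - n)
          have hb : (0:ℝ) ≤ ‖z‖ ^ ((1:ℝ)/2 - n) := Real.rpow_nonneg hzpos.le _
          linarith
      have hC2 : (0:ℝ) ≤ C / 2 := by positivity
      exact mul_le_mul_of_nonneg_left hcomp hC2
    · rw [hI]
      simp only
      rw [integral_undef hInt]
      simpa using hM0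
  -- cdb tends to zero
  have hcdb : Tendsto (fun β => cdb n δ β) (𝓝 ((n:ℝ) + 2)) (𝓝 0) := by
    have h1 : Tendsto (fun β : ℝ => 2 * ((n:ℝ) + 2 - β) * Real.Gamma ((n:ℝ)/2 + 1))
        (𝓝 ((n:ℝ) + 2)) (𝓝 0) := by
      have hc : Continuous fun β : ℝ => 2 * ((n:ℝ) + 2 - β) * Real.Gamma ((n:ℝ)/2 + 1) := by
        continuity
      have := hc.tendsto ((n:ℝ) + 2)
      simpa using this
    have h2 : Tendsto (fun β : ℝ => Real.pi ^ ((n:ℝ)/2) * δ ^ ((n:ℝ) + 2 - β))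
        (𝓝 ((n:ℝ) + 2)) (𝓝 (Real.pi ^ ((n:ℝ)/2) * 1)) := by
      refine Tendsto.const_mul _ ?_
      have hδc : ContinuousAt (fun y : ℝ => δ ^ y) 0 := Real.continuousAt_const_rpow hδ.ne'
      have hlin : Tendsto (fun β : ℝ => (n:ℝ) + 2 - β) (𝓝 ((n:ℝ) + 2)) (𝓝 0) := by
        have : Continuous fun β : ℝ => (n:ℝ) + 2 - β := by continuity
        simpa using this.tendsto ((n:ℝ) + 2)
      have := hδc.tendsto.comp hlin
      simpa [Real.rpow_zero, Function.comp_def] using this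
    have hne : Real.pi ^ ((n:ℝ)/2) * 1 ≠ 0 := by
      have : (0:ℝ) < Real.pi ^ ((n:ℝ)/2) := Real.rpow_pos_of_pos Real.pi_pos _
      simpa using this.ne'
    have := h1.div h2 hne
    rw [zero_div] at this
    exact this
  -- conclusion
  have hzero : Tendsto (fun β => cdb n δ β * I β) (𝓝 ((n:ℝ) + 2)) (𝓝 0) := by
    have habs : Tendsto (fun β => |cdb n δ β| * M) (𝓝 ((n:ℝ) + 2)) (𝓝 0) := by
      have := (hcdb.abs).mul_const M
      simpa using this
    refine squeeze_zero_norm' ?_ habs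
    have hev : Ioo ((n:ℝ) + 3/2) ((n:ℝ) + 5/2) ∈ 𝓝 ((n:ℝ) + 2) :=
      Ioo_mem_nhds (by linarith) (by linarith)
    filter_upwards [hev] with β hβ
    rw [Real.norm_eq_abs, abs_mul]
    exact mul_le_mul_of_nonneg_left (hkey β hβ) (abs_nonneg _)
  have hfinal : Tendsto (fun β => lap + cdb n δ β * I β) (𝓝 ((n:ℝ) + 2)) (𝓝 (lap + 0)) :=
    tendsto_const_nhds.add hzero
  rw [add_zero] at hfinal
  refine hfinal.congr' ?_
  have hev : Iio ((n:ℝ) + 3) ∈ 𝓝 ((n:ℝ) + 2) := Iio_mem_nhds (by linarith)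
  filter_upwards [hev] with β hβ
  exact (hL β hβ).symm
end

section
/- For z ∈ B_1(0) ⊂ ℝⁿ, δ > 0, and ν ∈ ℝⁿ, the integrand inequality cos(ν·δw) − 1 + (ν·δw)²/2 ≥ 0 holds for all w ∈ B_1(0); consequently, if n+2 ≤ β' < β < n+4, then for every ν ≠ 0, m^{δ,β}(ν) < m^{δ,β'}(ν) < 0, where m^{δ,β}(ν) = −‖ν‖² − (2(β−(n+2))Γ(n/2+1)/(π^{n/2}δ²)) ∫_{B_1(0)} (cos(ν·δw) − 1 + (ν·δw)²/2)/‖w‖^β dw. -/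
set_option maxHeartbeats 1000000

open MeasureTheory Real Filter
open scoped RealInnerProductSpace

section AuxLemmas
open Set Metric

lemma auxCosLB (t : ℝ) : 0 ≤ Real.cos t - 1 + t ^ 2 / 2 := by
  nlinarith [Real.one_sub_sq_div_two_le_cos (x := t)]

lemma auxCosLBstrict {t : ℝ} (ht : t ≠ 0) : 0 < Real.cos t - 1 + t ^ 2 / 2 := by
  have key : ∀ s : ℝ, 0 < s → 0 < Real.cos s - 1 + s ^ 2 / 2 := by
    intro s hs
    have hmono : StrictMonoOn (fun x : ℝ => Real.cos x - 1 + x ^ 2 / 2) (Set.Ici 0) := by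
      apply strictMonoOn_of_deriv_pos (convex_Ici 0)
      · exact (Real.continuous_cos.sub continuous_const).add
          ((continuous_pow 2).div_const 2) |>.continuousOn
      · intro x hx
        rw [interior_Ici] at hx
        have hd : HasDerivAt (fun x : ℝ => Real.cos x - 1 + x ^ 2 / 2)
            (-Real.sin x + (2 : ℕ) * x ^ 1 / 2) x :=
          ((Real.hasDerivAt_cos x).sub_const 1).add ((hasDerivAt_pow 2 x).div_const 2)
        rw [hd.deriv]
        have := Real.sin_lt hx
        simp only [pow_one, Nat.cast_ofNat]
        nlinarith
    have := hmono (Set.self_mem_Ici) (Set.mem_Ici.2 hs.le) hs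
    simpa using this
  rcases ht.lt_or_gt with h | h
  · have := key (-t) (by linarith)
    simpa using this
  · exact key t h

lemma auxQuartic (t : ℝ) : Real.cos t - 1 + t ^ 2 / 2 ≤ t ^ 4 / 24 := by
  have key : ∀ s : ℝ, 0 ≤ s → Real.cos s - 1 + s ^ 2 / 2 ≤ s ^ 4 / 24 := by
    intro s hs
    set g : ℝ → ℝ := fun x => x ^ 3 / 6 - x + Real.sin x with hg
    have hg' : ∀ x : ℝ, HasDerivAt g (x ^ 2 / 2 - 1 + Real.cos x) x := by
      intro x
      have : HasDerivAt g ((3 : ℕ) * x ^ 2 / 6 - 1 + Real.cos x) x :=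
        (((hasDerivAt_pow 3 x).div_const 6).sub (hasDerivAt_id x)).add (Real.hasDerivAt_sin x)
      convert this using 1
      push_cast; ring
    have hgmono : MonotoneOn g (Set.Ici 0) := by
      apply monotoneOn_of_deriv_nonneg (convex_Ici 0)
      · exact (Continuous.continuousOn (by continuity))
      · exact fun x hx => (hg' x).differentiableAt.differentiableWithinAt
      · intro x hx
        rw [(hg' x).deriv]
        have := auxCosLB x
        linarith
    have hgnn : ∀ x : ℝ, 0 ≤ x → 0 ≤ g x := by
      intro x hx
      have := hgmono Set.self_mem_Ici (Set.mem_Ici.2 hx) hx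
      simpa [hg] using this
    set h : ℝ → ℝ := fun x => x ^ 4 / 24 - (Real.cos x - 1 + x ^ 2 / 2) with hh
    have hh' : ∀ x : ℝ, HasDerivAt h (g x) x := by
      intro x
      have : HasDerivAt h ((4 : ℕ) * x ^ 3 / 24 - (-Real.sin x + (2 : ℕ) * x ^ 1 / 2)) x :=
        ((hasDerivAt_pow 4 x).div_const 24).sub
          (((Real.hasDerivAt_cos x).sub_const 1).add ((hasDerivAt_pow 2 x).div_const 2))
      convert this using 1
      simp [hg]; ring
    have hhmono : MonotoneOn h (Set.Ici 0) := by
      apply monotoneOn_of_deriv_nonneg (convex_Ici 0)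
      · exact Continuous.continuousOn (by continuity)
      · exact fun x hx => (hh' x).differentiableAt.differentiableWithinAt
      · intro x hx
        rw [(hh' x).deriv]
        exact hgnn x (le_of_lt (by rwa [interior_Ici] at hx))
    have := hhmono Set.self_mem_Ici (Set.mem_Ici.2 hs) hs
    simp only [hh] at this
    norm_num at this
    linarith
  rcases le_or_gt 0 t with h | h
  · exact key t h
  · have := key (-t) (by linarith)
    have e4 : (-t) ^ 4 = t ^ 4 := by ring
    rw [e4] at this
    simpa using this

lemma auxBall {n : ℕ} (hn : 1 ≤ n) {r : ℝ} (hr : -(n : ℝ) < r) :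
    IntegrableOn (fun w : EuclideanSpace ℝ (Fin n) => ‖w‖ ^ r)
      (Metric.ball (0 : EuclideanSpace ℝ (Fin n)) 1) volume := by
  haveI : Nontrivial (EuclideanSpace ℝ (Fin n)) :=
    Module.nontrivial_of_finrank_pos (R := ℝ)
      (by rw [finrank_euclideanSpace_fin]; omega)
  set E := EuclideanSpace ℝ (Fin n) with hE
  set G : ℝ → ℝ := fun y => if y < 1 then y ^ r else 0 with hGdef
  have hGmeas : Measurable G := by
    apply Measurable.ite measurableSet_Iio _ measurable_const
    measurability
  set m : ℕ := Module.finrank ℝ E - 1 with hmdef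
  have hmn : (m : ℝ) = (n : ℝ) - 1 := by
    have hfr : Module.finrank ℝ E = n := finrank_euclideanSpace_fin
    show ((Module.finrank ℝ E - 1 : ℕ) : ℝ) = (n : ℝ) - 1
    rw [hfr, Nat.cast_sub hn, Nat.cast_one]
  -- integrability of the 1D profile
  have h1d : IntegrableOn (fun y : ℝ => G y * (ENNReal.ofReal (y ^ m)).toReal)
      (Ioi (0 : ℝ)) volume := by
    rw [← Ioo_union_Ici_eq_Ioi (zero_lt_one)]
    apply IntegrableOn.union
    · have hint : IntegrableOn (fun y : ℝ => y ^ (r + m)) (Ioo (0 : ℝ) 1) volume :=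
        (intervalIntegral.integrableOn_Ioo_rpow_iff one_pos).2 (by rw [hmn]; linarith)
      apply hint.congr_fun _ measurableSet_Ioo
      intro y hy
      have hy0 : (0 : ℝ) < y := hy.1
      have hy1 : y < 1 := hy.2
      simp only [hGdef, if_pos hy1]
      rw [ENNReal.toReal_ofReal (by positivity), Real.rpow_add hy0, Real.rpow_natCast]
    · apply integrableOn_zero.congr_fun _ measurableSet_Ici
      intro y hy
      simp only [hGdef, if_neg (not_lt.2 (mem_Ici.1 hy)), zero_mul]
  -- transfer to volumeIoiPow
  have h1d' : Integrable (fun y : Ioi (0 : ℝ) => G y.1) (Measure.volumeIoiPow m) := by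
    rw [Measure.volumeIoiPow]
    rw [integrable_withDensity_iff (by measurability)
      (Filter.Eventually.of_forall fun _ => ENNReal.ofReal_lt_top)]
    rw [show (fun y : Ioi (0:ℝ) => G y.1 * (ENNReal.ofReal (y.1 ^ m)).toReal)
      = (fun y : ℝ => G y * (ENNReal.ofReal (y ^ m)).toReal) ∘ Subtype.val from rfl]
    rw [← integrableOn_univ,
      show (univ : Set (Ioi (0:ℝ))) = Subtype.val ⁻¹' (Ioi (0:ℝ)) by
        ext x; simp [x.2],
      ← (MeasurableEmbedding.subtype_coe measurableSet_Ioi).integrableOn_iff_comap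
        (by rw [Subtype.range_coe])]
    exact h1d
  -- product
  have hprod : Integrable (fun p : sphere (0 : E) 1 × Ioi (0 : ℝ) => G p.2.1)
      ((volume : Measure E).toSphere.prod (Measure.volumeIoiPow m)) := by
    have hmap : Integrable (fun y : Ioi (0:ℝ) => G y.1)
        (Measure.map Prod.snd ((volume : Measure E).toSphere.prod (Measure.volumeIoiPow m))) := by
      rw [Measure.map_snd_prod]
      exact h1d'.smul_measure (measure_ne_top _ _)
    exact (integrable_map_measure (f := Prod.snd) (g := fun y : Ioi (0:ℝ) => G y.1)
      ((hGmeas.comp measurable_subtype_coe).aestronglyMeasurable)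
      measurable_snd.aemeasurable).1 hmap
  -- back to E
  have hcomap : Integrable (fun x : ({0}ᶜ : Set E) => G ‖x.1‖)
      ((volume : Measure E).comap Subtype.val) := by
    have hmp := (Measure.measurePreserving_homeomorphUnitSphereProd (volume : Measure E))
    have := (hmp.integrable_comp_emb (Homeomorph.measurableEmbedding _)
      (g := fun p : sphere (0 : E) 1 × Ioi (0 : ℝ) => G p.2.1)).2 hprod
    convert this using 1
    funext x; simp [homeomorphUnitSphereProd_apply_snd_coe]
  have hOn : IntegrableOn (fun w : E => G ‖w‖) ({0}ᶜ) volume := by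
    rw [(MeasurableEmbedding.subtype_coe (measurableSet_singleton (0:E)).compl).integrableOn_iff_comap
        (by rw [Subtype.range_coe])]
    rw [show (Subtype.val ⁻¹' ({(0:E)}ᶜ) : Set ({0}ᶜ : Set E)) = univ by
        ext x; simp [x.2], integrableOn_univ]
    exact hcomap
  have hfull : Integrable (fun w : E => G ‖w‖) volume := by
    rw [← MeasureTheory.restrict_compl_singleton (0 : E) (μ := (volume : Measure E))]
    exact hOn
  apply hfull.integrableOn.congr_fun _ measurableSet_ball
  intro w hw
  simp [hGdef, mem_ball_zero_iff.1 hw]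

lemma auxInt {n : ℕ} (hn : 1 ≤ n) {δ : ℝ} (hδ : 0 < δ)
    (ν : EuclideanSpace ℝ (Fin n)) {β : ℝ} (hβu : β < (n : ℝ) + 4) :
    IntegrableOn (fun w : EuclideanSpace ℝ (Fin n) =>
      (Real.cos ⟪ν, δ • w⟫ - 1 + ⟪ν, δ • w⟫ ^ 2 / 2) / ‖w‖ ^ β)
      (Metric.ball (0 : EuclideanSpace ℝ (Fin n)) 1) volume := by
  have hmaj : IntegrableOn (fun w : EuclideanSpace ℝ (Fin n) => (δ * ‖ν‖) ^ 4 / 24 * ‖w‖ ^ ((4 : ℝ) - β))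
      (Metric.ball (0 : EuclideanSpace ℝ (Fin n)) 1) volume :=
    (auxBall hn (by linarith)).const_mul _
  have hinner : Continuous fun w : EuclideanSpace ℝ (Fin n) => (⟪ν, δ • w⟫ : ℝ) :=
    continuous_const.inner (continuous_id.const_smul δ)
  have hnum : Continuous fun w : EuclideanSpace ℝ (Fin n) =>
      Real.cos ⟪ν, δ • w⟫ - 1 + ⟪ν, δ • w⟫ ^ 2 / 2 :=
    ((Real.continuous_cos.comp hinner).sub continuous_const).add
      ((hinner.pow 2).div_const 2)
  have hden : Measurable fun w : EuclideanSpace ℝ (Fin n) => ‖w‖ ^ β :=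
    (by measurability : Measurable fun y : ℝ => y ^ β).comp measurable_norm
  apply Integrable.mono hmaj ((hnum.measurable.div hden).aestronglyMeasurable)
  rw [ae_restrict_iff' measurableSet_ball]
  apply Filter.Eventually.of_forall
  intro w hw
  simp only [Pi.div_apply]
  by_cases hw0 : w = 0
  · subst hw0
    simp only [smul_zero, inner_zero_right, Real.cos_zero]
    norm_num
    positivity
  · have hwpos : 0 < ‖w‖ := norm_pos_iff.2 hw0
    have hd : 0 < ‖w‖ ^ β := Real.rpow_pos_of_pos hwpos β
    set t : ℝ := ⟪ν, δ • w⟫ with htdef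
    have hnum0 : 0 ≤ Real.cos t - 1 + t ^ 2 / 2 := auxCosLB t
    have hnum4 : Real.cos t - 1 + t ^ 2 / 2 ≤ t ^ 4 / 24 := auxQuartic t
    have hts : |t| ≤ δ * ‖ν‖ * ‖w‖ := by
      calc |t| ≤ ‖ν‖ * ‖δ • w‖ := abs_real_inner_le_norm ν (δ • w)
        _ = δ * ‖ν‖ * ‖w‖ := by
            rw [norm_smul, Real.norm_eq_abs, abs_of_pos hδ]; ring
    have ht4 : t ^ 4 ≤ (δ * ‖ν‖ * ‖w‖) ^ 4 := by
      calc t ^ 4 = |t| ^ 4 := by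
            rw [← abs_pow]
            exact (abs_of_nonneg (by positivity)).symm
        _ ≤ (δ * ‖ν‖ * ‖w‖) ^ 4 := pow_le_pow_left₀ (abs_nonneg t) hts 4
    have hre : ‖w‖ ^ ((4 : ℝ) - β) = ‖w‖ ^ (4 : ℕ) / ‖w‖ ^ β := by
      rw [Real.rpow_sub hwpos, ← Real.rpow_natCast ‖w‖ 4]
      norm_num
    have hkey : Real.cos t - 1 + t ^ 2 / 2 ≤ (δ * ‖ν‖) ^ 4 / 24 * ‖w‖ ^ (4 : ℕ) := by
      nlinarith
    rw [Real.norm_eq_abs, abs_of_nonneg (div_nonneg hnum0 hd.le),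
      Real.norm_eq_abs, abs_of_nonneg (by positivity), hre, ← mul_div_assoc]
    gcongr

lemma auxPos {n : ℕ} (hn : 1 ≤ n) {δ : ℝ} (hδ : 0 < δ)
    {ν : EuclideanSpace ℝ (Fin n)} (hν : ν ≠ 0) {β : ℝ} (hβu : β < (n : ℝ) + 4) :
    0 < ∫ w in Metric.ball (0 : EuclideanSpace ℝ (Fin n)) 1,
      (Real.cos ⟪ν, δ • w⟫ - 1 + ⟪ν, δ • w⟫ ^ 2 / 2) / ‖w‖ ^ β := by
  have hae : 0 ≤ᵐ[volume.restrict (Metric.ball (0 : EuclideanSpace ℝ (Fin n)) 1)]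
      (fun w : EuclideanSpace ℝ (Fin n) =>
        (Real.cos ⟪ν, δ • w⟫ - 1 + ⟪ν, δ • w⟫ ^ 2 / 2) / ‖w‖ ^ β) :=
    Filter.Eventually.of_forall fun w =>
      div_nonneg (auxCosLB _) (Real.rpow_nonneg (norm_nonneg _) _)
  rw [setIntegral_pos_iff_support_of_nonneg_ae hae (auxInt hn hδ ν hβu)]
  set K : Submodule ℝ (EuclideanSpace ℝ (Fin n)) := LinearMap.ker (innerSL ℝ ν : EuclideanSpace ℝ (Fin n) →ₗ[ℝ] ℝ) with hK
  have hKne : K ≠ ⊤ := by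
    intro htop
    have : ν ∈ K := htop ▸ Submodule.mem_top
    rw [hK, LinearMap.mem_ker] at this
    simp only [ContinuousLinearMap.coe_coe, innerSL_apply_apply] at this
    exact (inner_self_ne_zero.2 hν) this
  have hK0 : volume (K : Set (EuclideanSpace ℝ (Fin n))) = 0 :=
    Measure.addHaar_submodule _ _ hKne
  have hsub : Metric.ball (0 : EuclideanSpace ℝ (Fin n)) 1 \ (K : Set _) ⊆
      Function.support (fun w : EuclideanSpace ℝ (Fin n) =>
        (Real.cos ⟪ν, δ • w⟫ - 1 + ⟪ν, δ • w⟫ ^ 2 / 2) / ‖w‖ ^ β) ∩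
      Metric.ball (0 : EuclideanSpace ℝ (Fin n)) 1 := by
    rintro w ⟨hwball, hwK⟩
    refine ⟨?_, hwball⟩
    have hiw : ⟪ν, w⟫ ≠ 0 := by
      intro h
      exact hwK (by rw [hK]; exact LinearMap.mem_ker.2 (by simpa [innerSL_apply_apply] using h))
    have ht : (⟪ν, δ • w⟫ : ℝ) ≠ 0 := by
      rw [real_inner_smul_right]
      exact mul_ne_zero hδ.ne' hiw
    have hw0 : w ≠ 0 := by
      intro h; apply hiw; rw [h, inner_zero_right]
    have hd : 0 < ‖w‖ ^ β := Real.rpow_pos_of_pos (norm_pos_iff.2 hw0) β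
    exact (div_pos (auxCosLBstrict ht) hd).ne'
  calc (0 : ENNReal) < volume (Metric.ball (0 : EuclideanSpace ℝ (Fin n)) 1) :=
        measure_ball_pos _ _ one_pos
    _ = volume (Metric.ball (0 : EuclideanSpace ℝ (Fin n)) 1 \ (K : Set _)) :=
        (measure_diff_null hK0).symm
    _ ≤ _ := measure_mono hsub

end AuxLemmas

theorem stmt6 (n : ℕ) (hn : 1 ≤ n) (δ : ℝ) (hδ : 0 < δ)
    (m : ℝ → EuclideanSpace ℝ (Fin n) → ℝ)
    (hm : ∀ β : ℝ, ∀ ν : EuclideanSpace ℝ (Fin n), m β ν =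
      -‖ν‖ ^ 2 - (2 * (β - ((n : ℝ) + 2)) * Real.Gamma ((n : ℝ) / 2 + 1) /
          (Real.pi ^ ((n : ℝ) / 2) * δ ^ 2)) *
        ∫ w in Metric.ball (0 : EuclideanSpace ℝ (Fin n)) 1,
          (Real.cos ⟪ν, δ • w⟫ - 1 + ⟪ν, δ • w⟫ ^ 2 / 2) / ‖w‖ ^ β) :
    (∀ ν : EuclideanSpace ℝ (Fin n),
        ∀ w ∈ Metric.ball (0 : EuclideanSpace ℝ (Fin n)) 1,
          0 ≤ Real.cos ⟪ν, δ • w⟫ - 1 + ⟪ν, δ • w⟫ ^ 2 / 2) ∧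
      ∀ β' β : ℝ, (n : ℝ) + 2 ≤ β' → β' < β → β < (n : ℝ) + 4 →
        ∀ ν : EuclideanSpace ℝ (Fin n), ν ≠ 0 →
          m β ν < m β' ν ∧ m β' ν < 0 := by
  constructor
  · intro ν w _
    exact auxCosLB _
  intro β' β hβ'l hβ'β hβu ν hν
  have hβ'u : β' < (n : ℝ) + 4 := by linarith
  set I : ℝ → ℝ := fun b => ∫ w in Metric.ball (0 : EuclideanSpace ℝ (Fin n)) 1,
      (Real.cos ⟪ν, δ • w⟫ - 1 + ⟪ν, δ • w⟫ ^ 2 / 2) / ‖w‖ ^ b with hIdef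
  set C : ℝ → ℝ := fun b => 2 * (b - ((n : ℝ) + 2)) * Real.Gamma ((n : ℝ) / 2 + 1) /
      (Real.pi ^ ((n : ℝ) / 2) * δ ^ 2) with hCdef
  have hP : 0 < Real.pi ^ ((n : ℝ) / 2) * δ ^ 2 := by
    have := Real.pi_pos
    positivity
  have hG0 : 0 < Real.Gamma ((n : ℝ) / 2 + 1) := Real.Gamma_pos_of_pos (by positivity)
  have hC'0 : 0 ≤ C β' := by
    apply div_nonneg _ hP.le
    have : (0:ℝ) ≤ β' - ((n:ℝ) + 2) := by linarith
    positivity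
  have hCC : C β' < C β := by
    apply div_lt_div_of_pos_right ?_ hP
    have h1 : β' - ((n:ℝ)+2) < β - ((n:ℝ)+2) := by linarith
    nlinarith
  have hIpos : 0 < I β' := auxPos hn hδ hν hβ'u
  have hImono : I β' ≤ I β := by
    apply setIntegral_mono_on (auxInt hn hδ ν hβ'u) (auxInt hn hδ ν hβu)
      measurableSet_ball
    intro w hw
    by_cases hw0 : w = 0
    · subst hw0
      simp [inner_zero_right]
    · have hwpos : 0 < ‖w‖ := norm_pos_iff.2 hw0
      have hle : ‖w‖ ^ β ≤ ‖w‖ ^ β' :=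
        Real.rpow_le_rpow_of_exponent_ge hwpos
          (le_of_lt (mem_ball_zero_iff.1 hw)) hβ'β.le
      have hd : 0 < ‖w‖ ^ β := Real.rpow_pos_of_pos hwpos β
      gcongr
      exact auxCosLB _
  have hfinal : C β' * I β' < C β * I β := by
    calc C β' * I β' < C β * I β' := by
          exact mul_lt_mul_of_pos_right hCC hIpos
      _ ≤ C β * I β := by
          apply mul_le_mul_of_nonneg_left hImono
          linarith
  have hν2 : 0 < ‖ν‖ ^ 2 := by
    have : 0 < ‖ν‖ := norm_pos_iff.2 hν
    positivity
  constructor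
  · rw [hm β ν, hm β' ν]
    have e1 : C β * I β = (2 * (β - ((n : ℝ) + 2)) * Real.Gamma ((n : ℝ) / 2 + 1) /
          (Real.pi ^ ((n : ℝ) / 2) * δ ^ 2)) *
        ∫ w in Metric.ball (0 : EuclideanSpace ℝ (Fin n)) 1,
          (Real.cos ⟪ν, δ • w⟫ - 1 + ⟪ν, δ • w⟫ ^ 2 / 2) / ‖w‖ ^ β := rfl
    have e2 : C β' * I β' = (2 * (β' - ((n : ℝ) + 2)) * Real.Gamma ((n : ℝ) / 2 + 1) /
          (Real.pi ^ ((n : ℝ) / 2) * δ ^ 2)) *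
        ∫ w in Metric.ball (0 : EuclideanSpace ℝ (Fin n)) 1,
          (Real.cos ⟪ν, δ • w⟫ - 1 + ⟪ν, δ • w⟫ ^ 2 / 2) / ‖w‖ ^ β' := rfl
    rw [← e1, ← e2]
    linarith
  · rw [hm β' ν]
    have e2 : C β' * I β' = (2 * (β' - ((n : ℝ) + 2)) * Real.Gamma ((n : ℝ) / 2 + 1) /
          (Real.pi ^ ((n : ℝ) / 2) * δ ^ 2)) *
        ∫ w in Metric.ball (0 : EuclideanSpace ℝ (Fin n)) 1,
          (Real.cos ⟪ν, δ • w⟫ - 1 + ⟪ν, δ • w⟫ ^ 2 / 2) / ‖w‖ ^ β' := rfl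
    rw [← e2]
    nlinarith
end

section
/- Let f ∈ H^{s₁}(Tⁿ) and g ∈ H^{s₂}(Tⁿ), and suppose the multipliers satisfy m_k < 0 for k ≠ 0 and the asymptotic lower bounds |m_k| ≥ C₁ > 0 when β ≤ n and |m_k| ≥ C₂‖k‖^{β−n} when β > n, for large ‖k‖. Then for every t ≥ 0, the distribution U(t) = (f̂₀ + ĝ₀ t) + ∑_{0≠k∈ℤⁿ} [f̂_k cos(√(−m_k) t) + (ĝ_k/√(−m_k)) sin(√(−m_k) t)] e^{ik·x} belongs to H^s(Tⁿ), where s = min{s₁, s₂ + θ} with θ = max{0, (β−n)/2}. -/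
open Real Filter

/-- Euclidean norm of a lattice point `k ∈ ℤⁿ`. -/
noncomputable def knrm (n : ℕ) (k : Fin n → ℤ) : ℝ :=
  Real.sqrt (∑ i, ((k i : ℝ)) ^ 2)

/-- Fourier coefficient of the solution of the homogeneous nonlocal wave
equation with initial data `f, g` and multipliers `m`. -/
noncomputable def homCoef (n : ℕ) (m : (Fin n → ℤ) → ℝ)
    (fh gh : (Fin n → ℤ) → ℂ) (t : ℝ) (k : Fin n → ℤ) : ℂ :=
  if k = 0 then fh 0 + gh 0 * (t : ℂ)
  else fh k * (Real.cos (Real.sqrt (-m k) * t) : ℝ) +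
    gh k * ((Real.sin (Real.sqrt (-m k) * t) / Real.sqrt (-m k) : ℝ) : ℂ)

lemma knrm_nonneg (n : ℕ) (k : Fin n → ℤ) : 0 ≤ knrm n k := Real.sqrt_nonneg _

lemma finite_small (n : ℕ) (R : ℝ) : {k : Fin n → ℤ | knrm n k < R}.Finite := by
  apply Set.Finite.subset
    (Set.Finite.pi (fun _ : Fin n => Set.finite_Icc (-⌈R⌉) ⌈R⌉))
  intro k hk
  simp only [Set.mem_setOf_eq] at hk
  have hR : 0 < R := lt_of_le_of_lt (knrm_nonneg n k) hk
  have hS : 0 ≤ ∑ j, ((k j : ℝ)) ^ 2 := Finset.sum_nonneg fun _ _ => sq_nonneg _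
  have h2 : ∑ j, ((k j : ℝ)) ^ 2 < R ^ 2 := by
    have hsq := Real.sq_sqrt hS
    have hk2 : Real.sqrt (∑ j, ((k j : ℝ)) ^ 2) < R := hk
    nlinarith [Real.sqrt_nonneg (∑ j, ((k j : ℝ)) ^ 2)]
  simp only [Set.mem_pi, Set.mem_univ, forall_true_left, Set.mem_Icc]
  intro i
  have h1 : ((k i : ℝ)) ^ 2 ≤ ∑ j, ((k j : ℝ)) ^ 2 :=
    Finset.single_le_sum (f := fun j => ((k j : ℝ)) ^ 2)
      (fun j _ => sq_nonneg _) (Finset.mem_univ i)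
  have h3 : |(k i : ℝ)| ≤ R := by
    nlinarith [abs_nonneg ((k i : ℝ)), sq_abs ((k i : ℝ))]
  have hc := Int.le_ceil R
  constructor
  · have : ((-⌈R⌉ : ℤ) : ℝ) ≤ (k i : ℝ) := by
      push_cast
      linarith [neg_abs_le ((k i : ℝ))]
    exact_mod_cast this
  · have : ((k i : ℝ)) ≤ ((⌈R⌉ : ℤ) : ℝ) := le_trans (le_trans (le_abs_self _) h3) hc
    exact_mod_cast this

set_option maxHeartbeats 1000000 in
theorem stmt13 (n : ℕ) (hn : 1 ≤ n) (δ β : ℝ) (hδ : 0 < δ) (hβ : β < (n : ℝ) + 4)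
    (s₁ s₂ : ℝ) (fh gh : (Fin n → ℤ) → ℂ) (m : (Fin n → ℤ) → ℝ)
    (hmneg : ∀ k : Fin n → ℤ, k ≠ 0 → m k < 0)
    (hf : Summable (fun k : Fin n → ℤ => (1 + knrm n k ^ 2) ^ s₁ * ‖fh k‖ ^ 2))
    (hg : Summable (fun k : Fin n → ℤ => (1 + knrm n k ^ 2) ^ s₂ * ‖gh k‖ ^ 2))
    (hbound₁ : β ≤ (n : ℝ) → ∃ C > (0 : ℝ), ∃ R : ℝ,
      ∀ k : Fin n → ℤ, R ≤ knrm n k → C ≤ |m k|)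
    (hbound₂ : (n : ℝ) < β → ∃ C > (0 : ℝ), ∃ R : ℝ,
      ∀ k : Fin n → ℤ, R ≤ knrm n k → C * knrm n k ^ (β - n) ≤ |m k|)
    (t : ℝ) (ht : 0 ≤ t) :
    Summable (fun k : Fin n → ℤ =>
      (1 + knrm n k ^ 2) ^ (min s₁ (s₂ + max 0 ((β - n) / 2))) *
        ‖homCoef n m fh gh t k‖ ^ 2) := by
  set θ : ℝ := max 0 ((β - n) / 2) with hθdef
  set s : ℝ := min s₁ (s₂ + θ) with hsdef
  have hθ0 : 0 ≤ θ := le_max_left _ _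
  -- uniform bound for the sine factor, outside a ball
  obtain ⟨K, hK0, R, hR⟩ : ∃ K : ℝ, 0 ≤ K ∧ ∃ R : ℝ, ∀ k : Fin n → ℤ, k ≠ 0 →
      R ≤ knrm n k →
      (1 + knrm n k ^ 2) ^ θ *
        (Real.sin (Real.sqrt (-m k) * t) / Real.sqrt (-m k)) ^ 2 ≤ K := by
    rcases le_or_gt β (n : ℝ) with hb | hb
    · refine ⟨t ^ 2, sq_nonneg t, 0, fun k hk0 _ => ?_⟩
      have hθz : θ = 0 := max_eq_left (by linarith)
      have hm : 0 < -m k := by linarith [hmneg k hk0]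
      have ha : 0 < Real.sqrt (-m k) := Real.sqrt_pos.mpr hm
      rw [hθz, Real.rpow_zero, one_mul, div_pow, div_le_iff₀ (by positivity)]
      calc Real.sin (Real.sqrt (-m k) * t) ^ 2
          ≤ (Real.sqrt (-m k) * t) ^ 2 := Real.sin_sq_le_sq
        _ = t ^ 2 * Real.sqrt (-m k) ^ 2 := by ring
    · obtain ⟨C, hC, R, hbd⟩ := hbound₂ hb
      have hθv : θ = (β - n) / 2 := max_eq_right (by linarith)
      refine ⟨2 ^ θ / C, by positivity, max R 1, fun k hk0 hk => ?_⟩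
      have hk1 : 1 ≤ knrm n k := le_trans (le_max_right _ _) hk
      have hm : 0 < -m k := by linarith [hmneg k hk0]
      have ha : 0 < Real.sqrt (-m k) := Real.sqrt_pos.mpr hm
      have ha2 : Real.sqrt (-m k) ^ 2 = -m k := Real.sq_sqrt hm.le
      set N : ℝ := knrm n k ^ 2 with hN
      have hN1 : 1 ≤ N := one_le_pow₀ hk1
      have hNθ : (0 : ℝ) < N ^ θ := Real.rpow_pos_of_pos (by linarith) θ
      have h2θ : (0 : ℝ) < 2 ^ θ := Real.rpow_pos_of_pos two_pos θ
      have hmb : C * N ^ θ ≤ -m k := by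
        have h1 : knrm n k ^ (β - (n : ℝ)) = N ^ θ := by
          rw [hN, hθv, ← Real.rpow_natCast (knrm n k) 2,
            ← Real.rpow_mul (knrm_nonneg n k)]
          congr 1
          ring
        have h2 := hbd k (le_trans (le_max_left _ _) hk)
        rw [h1, abs_of_neg (hmneg k hk0)] at h2
        exact h2
      have h1N : (1 + N) ^ θ ≤ 2 ^ θ * N ^ θ := by
        rw [← Real.mul_rpow (by norm_num) (by linarith)]
        exact Real.rpow_le_rpow (by linarith) (by linarith) hθ0
      have hsin : (Real.sin (Real.sqrt (-m k) * t) / Real.sqrt (-m k)) ^ 2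
          ≤ 1 / (-m k) := by
        rw [div_pow, ha2]
        exact div_le_div₀ zero_le_one (Real.sin_sq_le_one _) hm le_rfl
      calc (1 + N) ^ θ * (Real.sin (Real.sqrt (-m k) * t) / Real.sqrt (-m k)) ^ 2
          ≤ (2 ^ θ * N ^ θ) * (1 / (-m k)) :=
            mul_le_mul h1N hsin (sq_nonneg _) (by positivity)
        _ ≤ 2 ^ θ / C := by
            rw [mul_one_div, div_le_div_iff₀ hm hC]
            calc 2 ^ θ * N ^ θ * C = 2 ^ θ * (C * N ^ θ) := by ring
              _ ≤ 2 ^ θ * (-m k) := by nlinarith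
  -- comparison summable series
  have hsum : Summable (fun k : Fin n → ℤ =>
      2 * ((1 + knrm n k ^ 2) ^ s₁ * ‖fh k‖ ^ 2) +
      (2 * K) * ((1 + knrm n k ^ 2) ^ s₂ * ‖gh k‖ ^ 2)) :=
    (hf.mul_left 2).add (hg.mul_left (2 * K))
  refine Summable.of_norm_bounded_eventually hsum ?_
  have hfin : ({k : Fin n → ℤ | knrm n k < R} ∪ {0}).Finite :=
    (finite_small n R).union (Set.finite_singleton 0)
  filter_upwards [hfin.eventually_cofinite_notMem] with k hk
  simp only [Set.mem_union, Set.mem_setOf_eq, Set.mem_singleton_iff, not_or, not_lt] at hk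
  obtain ⟨hkR, hk0⟩ := hk
  have hm : 0 < -m k := by linarith [hmneg k hk0]
  have ha : 0 < Real.sqrt (-m k) := Real.sqrt_pos.mpr hm
  set N : ℝ := knrm n k ^ 2 with hN
  have hN0 : 0 ≤ N := sq_nonneg _
  have hB1 : (1 : ℝ) ≤ 1 + N := by linarith
  have hBpos : (0 : ℝ) < 1 + N := by linarith
  set d : ℝ := Real.sin (Real.sqrt (-m k) * t) / Real.sqrt (-m k) with hd
  -- norm of the coefficient
  have hcoef : ‖homCoef n m fh gh t k‖ ≤ ‖fh k‖ + ‖gh k‖ * |d| := by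
    rw [homCoef, if_neg hk0]
    calc ‖fh k * ((Real.cos (Real.sqrt (-m k) * t) : ℝ) : ℂ) +
          gh k * ((d : ℝ) : ℂ)‖
        ≤ ‖fh k * ((Real.cos (Real.sqrt (-m k) * t) : ℝ) : ℂ)‖ +
          ‖gh k * ((d : ℝ) : ℂ)‖ := norm_add_le _ _
      _ ≤ ‖fh k‖ + ‖gh k‖ * |d| := by
          rw [norm_mul, norm_mul, Complex.norm_real, Complex.norm_real,
            Real.norm_eq_abs, Real.norm_eq_abs]
          have := Real.abs_cos_le_one (Real.sqrt (-m k) * t)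
          nlinarith [norm_nonneg (fh k), norm_nonneg (gh k), abs_nonneg d]
  have hsq : ‖homCoef n m fh gh t k‖ ^ 2 ≤ 2 * ‖fh k‖ ^ 2 + 2 * d ^ 2 * ‖gh k‖ ^ 2 := by
    nlinarith [norm_nonneg (homCoef n m fh gh t k), norm_nonneg (fh k),
      norm_nonneg (gh k), abs_nonneg d, sq_abs d, sq_nonneg (‖fh k‖ - ‖gh k‖ * |d|)]
  have hb1 : (1 + N) ^ s ≤ (1 + N) ^ s₁ :=
    Real.rpow_le_rpow_of_exponent_le hB1 (min_le_left _ _)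
  have hb2 : (1 + N) ^ s ≤ (1 + N) ^ s₂ * (1 + N) ^ θ := by
    rw [← Real.rpow_add hBpos]
    exact Real.rpow_le_rpow_of_exponent_le hB1 (min_le_right _ _)
  have hKb : (1 + N) ^ θ * d ^ 2 ≤ K := hR k hk0 hkR
  have hpos : ∀ r : ℝ, (0:ℝ) ≤ (1 + N) ^ r := fun r => Real.rpow_nonneg hBpos.le r
  rw [Real.norm_of_nonneg (by positivity)]
  calc (1 + N) ^ s * ‖homCoef n m fh gh t k‖ ^ 2
      ≤ (1 + N) ^ s * (2 * ‖fh k‖ ^ 2 + 2 * d ^ 2 * ‖gh k‖ ^ 2) :=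
        mul_le_mul_of_nonneg_left hsq (hpos s)
    _ = 2 * ((1 + N) ^ s * ‖fh k‖ ^ 2) + 2 * ((1 + N) ^ s * d ^ 2) * ‖gh k‖ ^ 2 := by
        ring
    _ ≤ 2 * ((1 + N) ^ s₁ * ‖fh k‖ ^ 2) +
        2 * ((1 + N) ^ s₂ * ((1 + N) ^ θ * d ^ 2)) * ‖gh k‖ ^ 2 := by
        have e1 : (1 + N) ^ s * ‖fh k‖ ^ 2 ≤ (1 + N) ^ s₁ * ‖fh k‖ ^ 2 :=
          mul_le_mul_of_nonneg_right hb1 (sq_nonneg _)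
        have e2 : (1 + N) ^ s * d ^ 2 ≤ (1 + N) ^ s₂ * ((1 + N) ^ θ * d ^ 2) := by
          rw [← mul_assoc]
          exact mul_le_mul_of_nonneg_right hb2 (sq_nonneg _)
        nlinarith [sq_nonneg ‖gh k‖]
    _ ≤ 2 * ((1 + N) ^ s₁ * ‖fh k‖ ^ 2) + (2 * K) * ((1 + N) ^ s₂ * ‖gh k‖ ^ 2) := by
        have e3 : (1 + N) ^ s₂ * ((1 + N) ^ θ * d ^ 2) ≤ (1 + N) ^ s₂ * K :=
          mul_le_mul_of_nonneg_left hKb (hpos s₂)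
        nlinarith [sq_nonneg ‖gh k‖]
end

section
/- For a > 0, b > 0, and z < 0, the derivative of ψ(a) := ₁F₂(a; a+1, b; z) with respect to the parameter a satisfies ψ′(a) = (z/(b(a+1)²)) · ₂F₃(a+1, a+1; a+2, a+2, b+1; z). -/
open Real Filter

/-- Pochhammer symbol `(a)_k` for real `a`. -/
noncomputable def poch (a : ℝ) (k : ℕ) : ℝ := (ascPochhammer ℝ k).eval a

/-- The generalized hypergeometric function `₁F₂(a; b₁, b₂; z)`. -/
noncomputable def oneF2 (a b₁ b₂ z : ℝ) : ℝ :=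
  ∑' k : ℕ, poch a k / (poch b₁ k * poch b₂ k) * z ^ k / (Nat.factorial k : ℝ)

/-- The generalized hypergeometric function `₂F₃(a₁, a₂; b₁, b₂, b₃; z)`. -/
noncomputable def twoF3 (a₁ a₂ b₁ b₂ b₃ z : ℝ) : ℝ :=
  ∑' k : ℕ, poch a₁ k * poch a₂ k / (poch b₁ k * poch b₂ k * poch b₃ k) *
    z ^ k / (Nat.factorial k : ℝ)

lemma poch_zero (x : ℝ) : poch x 0 = 1 := by simp [poch]

lemma poch_succ (x : ℝ) (k : ℕ) : poch x (k + 1) = poch x k * (x + k) := by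
  simp [poch, ascPochhammer_succ_right]

lemma poch_succ_left (x : ℝ) (k : ℕ) : poch x (k + 1) = x * poch (x + 1) k := by
  simp [poch, ascPochhammer_succ_left, Polynomial.eval_comp]

lemma poch_pos {x : ℝ} (hx : 0 < x) (k : ℕ) : 0 < poch x k := by
  induction k with
  | zero => simp [poch_zero]
  | succ n ih => rw [poch_succ]; positivity

lemma poch_key (x : ℝ) (k : ℕ) : poch x k * (x + k) = x * poch (x + 1) k := by
  rw [← poch_succ, poch_succ_left]

lemma one_le_poch {x : ℝ} (hx : 1 ≤ x) (k : ℕ) : 1 ≤ poch x k := by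
  induction k with
  | zero => simp [poch_zero]
  | succ n ih =>
      rw [poch_succ]
      have hn : (0:ℝ) ≤ n := Nat.cast_nonneg n
      nlinarith

lemma poch_lb {b : ℝ} (hb : 0 < b) (k : ℕ) : min 1 b ≤ poch b k := by
  cases k with
  | zero => simp [poch_zero]
  | succ n =>
      rw [poch_succ_left]
      have h1 : 1 ≤ poch (b + 1) n := one_le_poch (by linarith) n
      calc min 1 b ≤ b := min_le_right _ _
        _ = b * 1 := by ring
        _ ≤ b * poch (b + 1) n := by nlinarith

theorem stmt17 (a b z : ℝ) (ha : 0 < a) (hb : 0 < b) (hz : z < 0) :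
    HasDerivAt (fun a : ℝ => oneF2 a (a + 1) b z)
      (z / (b * (a + 1) ^ 2) * twoF3 (a + 1) (a + 1) (a + 2) (a + 2) (b + 1) z)
      a := by
  set c : ℕ → ℝ := fun k => z ^ k / (poch b k * Nat.factorial k) with hc
  set g : ℕ → ℝ → ℝ := fun k x => x / (x + k) * c k with hg_def
  set g' : ℕ → ℝ → ℝ := fun k x => (k : ℝ) / (x + k) ^ 2 * c k with hg'_def
  set u : ℕ → ℝ := fun k => |z| ^ k / (poch b k * Nat.factorial k) with hu_def
  have hden : ∀ k : ℕ, (0:ℝ) < poch b k * Nat.factorial k := fun k =>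
    mul_pos (poch_pos hb k) (by exact_mod_cast Nat.factorial_pos k)
  have habs : ∀ k, |c k| = u k := by
    intro k
    simp only [hc, hu_def, abs_div, abs_pow, abs_of_pos (hden k)]
  have hu : Summable u := by
    apply Summable.of_nonneg_of_le
      (fun k => by
        simp only [hu_def]
        exact div_nonneg (by positivity) (hden k).le)
      (fun k => ?_) ((Real.summable_pow_div_factorial |z|).mul_left (1 / min 1 b))
    have h1 : min 1 b ≤ poch b k := poch_lb hb k
    have h2 : (0:ℝ) < min 1 b := lt_min one_pos hb
    rw [hu_def]
    rw [div_le_iff₀ (hden k)]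
    have : (0:ℝ) ≤ |z| ^ k / (Nat.factorial k : ℝ) := by positivity
    calc |z| ^ k = (|z| ^ k / (Nat.factorial k : ℝ)) * (Nat.factorial k : ℝ) := by
          field_simp
      _ ≤ (1 / min 1 b * (|z| ^ k / (Nat.factorial k : ℝ))) * (poch b k * (Nat.factorial k : ℝ)) := by
          rw [one_div]
          have hfk : (0:ℝ) < (Nat.factorial k : ℝ) := by exact_mod_cast Nat.factorial_pos k
          have h3 : (1:ℝ) ≤ (min 1 b)⁻¹ * poch b k := by
            calc (1:ℝ) = (min 1 b)⁻¹ * min 1 b := by field_simp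
              _ ≤ (min 1 b)⁻¹ * poch b k := by gcongr
          nlinarith [mul_le_mul_of_nonneg_left h3 (mul_nonneg this hfk.le)]
      _ = _ := by ring
  have hkpos : ∀ (k : ℕ) (x : ℝ), x ∈ Set.Ioi (0:ℝ) → (0:ℝ) < x + k := by
    intro k x hx
    have : (0:ℝ) ≤ (k:ℝ) := Nat.cast_nonneg k
    have hx' : 0 < x := hx
    linarith
  have hg : ∀ (k : ℕ) (x : ℝ), x ∈ Set.Ioi (0:ℝ) → HasDerivAt (g k) (g' k x) x := by
    intro k x hx
    have hne : x + (k:ℝ) ≠ 0 := ne_of_gt (hkpos k x hx)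
    have h1 : HasDerivAt (fun y : ℝ => y / (y + k)) ((k : ℝ) / (x + k) ^ 2) x := by
      have := (hasDerivAt_id x).div ((hasDerivAt_id x).add_const (k:ℝ)) hne
      convert this using 1
      · rfl
      · rfl
      · rfl
      · simp only [id]
        ring
    exact h1.mul_const (c k)
  have hg' : ∀ (k : ℕ) (x : ℝ), x ∈ Set.Ioi (0:ℝ) → ‖g' k x‖ ≤ u k := by
    intro k x hx
    have hx' : (0:ℝ) < x := hx
    have hxk := hkpos k x hx
    have hk2 : (k:ℝ) ≤ (x + k) ^ 2 := by
      have hkk : (k:ℝ) ≤ (k:ℝ) ^ 2 := by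
        have : k ≤ k ^ 2 := Nat.le_self_pow (by norm_num) k
        exact_mod_cast this
      nlinarith [Nat.cast_nonneg (α := ℝ) k]
    have hfrac : (k:ℝ) / (x + k) ^ 2 ≤ 1 := by
      rw [div_le_one (by positivity)]; exact hk2
    have hfrac0 : (0:ℝ) ≤ (k:ℝ) / (x + k) ^ 2 := by positivity
    calc ‖g' k x‖ = (k:ℝ) / (x + k) ^ 2 * |c k| := by
          rw [hg'_def]; simp [abs_mul, abs_of_nonneg hfrac0]
      _ ≤ 1 * |c k| := by
          have : (0:ℝ) ≤ |c k| := abs_nonneg _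
          nlinarith
      _ = u k := by rw [one_mul, habs]
  have hg0 : Summable fun k => g k a := by
    apply Summable.of_norm_bounded hu
    intro k
    have hak := hkpos k a ha
    have hfrac : a / (a + k) ≤ 1 := by
      rw [div_le_one hak]
      have : (0:ℝ) ≤ (k:ℝ) := Nat.cast_nonneg k
      linarith
    have hfrac0 : (0:ℝ) ≤ a / (a + k) := by positivity
    calc ‖g k a‖ = a / (a + k) * |c k| := by
          rw [hg_def]
          simp only [Real.norm_eq_abs, abs_mul]
          rw [abs_of_nonneg hfrac0]
      _ ≤ 1 * |c k| := by
          have : (0:ℝ) ≤ |c k| := abs_nonneg _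
          nlinarith
      _ = u k := by rw [one_mul, habs]
  have key := hasDerivAt_tsum_of_isPreconnected hu isOpen_Ioi isPreconnected_Ioi
    hg hg' (Set.mem_Ioi.2 ha) hg0 (Set.mem_Ioi.2 ha)
  have heq : (fun x : ℝ => oneF2 x (x + 1) b z) =ᶠ[nhds a] fun x => ∑' k, g k x := by
    filter_upwards [isOpen_Ioi.mem_nhds (Set.mem_Ioi.2 ha)] with x hx
    have hx' : (0:ℝ) < x := hx
    unfold oneF2
    apply tsum_congr
    intro k
    have hQ : (0:ℝ) < poch (x + 1) k := poch_pos (by linarith) k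
    have hB : (0:ℝ) < poch b k := poch_pos hb k
    have hxk := hkpos k x hx
    have hPQ : poch x k / poch (x + 1) k = x / (x + k) := by
      rw [div_eq_div_iff (ne_of_gt hQ) (ne_of_gt hxk)]
      exact poch_key x k
    have hfk : (0:ℝ) < (Nat.factorial k : ℝ) := by exact_mod_cast Nat.factorial_pos k
    show poch x k / (poch (x + 1) k * poch b k) * z ^ k / (Nat.factorial k : ℝ) =
      x / (x + k) * (z ^ k / (poch b k * (Nat.factorial k : ℝ)))
    rw [← hPQ]
    field_simp
  have hderiv := key.congr_of_eventuallyEq heq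
  have hval : ∑' k, g' k a = z / (b * (a + 1) ^ 2) *
      twoF3 (a + 1) (a + 1) (a + 2) (a + 2) (b + 1) z := by
    have hsum' : Summable fun k => g' k a :=
      Summable.of_norm_bounded hu fun k => hg' k a (Set.mem_Ioi.2 ha)
    rw [hsum'.tsum_eq_zero_add]
    have h0 : g' 0 a = 0 := by simp [hg'_def]
    rw [h0, zero_add]
    unfold twoF3
    rw [← tsum_mul_left]
    apply tsum_congr
    intro m
    have hP : (0:ℝ) < poch (a + 1) m := poch_pos (by linarith) m
    have hQ : (0:ℝ) < poch (a + 2) m := poch_pos (by linarith) m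
    have hB : (0:ℝ) < poch (b + 1) m := poch_pos (by linarith) m
    have hm1 : (0:ℝ) < a + 1 + m := by
      have : (0:ℝ) ≤ (m:ℝ) := Nat.cast_nonneg m
      linarith
    have hkey : poch (a + 1) m * (a + 1 + m) = (a + 1) * poch (a + 2) m := by
      have := poch_key (a + 1) m
      rw [show a + 1 + 1 = a + 2 by ring] at this
      exact this
    have hbkey : poch b (m + 1) = b * poch (b + 1) m := poch_succ_left b m
    have hfm : (0:ℝ) < (Nat.factorial m : ℝ) := by exact_mod_cast Nat.factorial_pos m
    have hQeq : poch (a + 2) m = poch (a + 1) m * (a + 1 + m) / (a + 1) := by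
      rw [eq_div_iff (by linarith : a + 1 ≠ 0)]
      linarith [hkey]
    show ((m + 1 : ℕ) : ℝ) / (a + ((m + 1 : ℕ) : ℝ)) ^ 2 *
        (z ^ (m + 1) / (poch b (m + 1) * (Nat.factorial (m + 1) : ℝ))) =
      z / (b * (a + 1) ^ 2) *
        (poch (a + 1) m * poch (a + 1) m /
          (poch (a + 2) m * poch (a + 2) m * poch (b + 1) m) * z ^ m / (Nat.factorial m : ℝ))
    rw [hbkey, hQeq, Nat.factorial_succ]
    push_cast
    have hmr : (0:ℝ) ≤ (m:ℝ) := Nat.cast_nonneg m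
    field_simp
    ring
  rw [← hval]
  exact hderiv
end

section
/- Let m_k < 0 for k ≠ 0 be eigenvalues of an operator L on the torus with Le^{ik·x} = m_k e^{ik·x}, and let f ∈ H^{s₁}(Tⁿ), g ∈ H^{s₂}(Tⁿ). If the Fourier series U(t) = (f̂₀+ĝ₀t) + ∑_{0≠k}[f̂_k cos(√(−m_k)t) + ĝ_k sin(√(−m_k)t)/√(−m_k)]e^{ik·x} converges in H^q(Tⁿ) for each t and is twice Gateaux differentiable in H^q(Tⁿ), then U is the unique solution in C²([0,∞); H^q(Tⁿ)) of U″(t) = LU(t) for t > 0, U(0) = f, U′(0) = g. -/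
open Real Filter
open scoped Topology

/-- `V' ` is the Gateaux derivative of the `H^q`-valued map `V`
(represented by Fourier coefficients, with weights `w`) at time `t`:
the weighted squared-coefficient norms of the difference quotients minus `V'`
are summable and their sums tend to `0` as `h → 0`. -/
def GateauxDerivAt (K : Type*) (w : K → ℝ) (V : ℝ → K → ℂ) (V' : K → ℂ)
    (t : ℝ) : Prop :=
  ∃ S : ℝ → ℝ,
    (∀ h : ℝ, h ≠ 0 →
      HasSum (fun k : K => w k * ‖(V (t + h) k - V t k) / (h : ℂ) - V' k‖ ^ 2)
        (S h)) ∧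
    Tendsto S (𝓝[≠] (0 : ℝ)) (𝓝 0)

/-! ### Auxiliary lemmas -/

/-- Gateaux differentiability (with positive weights) implies coefficientwise
differentiability. -/
lemma gateaux_pointwise {K : Type*} {w : K → ℝ} (hw : ∀ k, 0 < w k)
    {V : ℝ → K → ℂ} {V' : K → ℂ} {t : ℝ}
    (hG : GateauxDerivAt K w V V' t) (k : K) :
    HasDerivAt (fun s => V s k) (V' k) t := by
  obtain ⟨S, hS, hS0⟩ := hG
  rw [hasDerivAt_iff_tendsto_slope_zero]
  have hsq : Tendsto (fun h : ℝ => ‖(V (t + h) k - V t k) / (h : ℂ) - V' k‖ ^ 2)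
      (𝓝[≠] (0:ℝ)) (𝓝 0) := by
    apply squeeze_zero' (Eventually.of_forall fun h => by positivity)
    · filter_upwards [self_mem_nhdsWithin] with h (hh : h ≠ 0)
      have := le_hasSum (hS h hh) k (fun j _ => mul_nonneg (hw j).le (by positivity))
      have hwk := hw k
      calc ‖(V (t + h) k - V t k) / (h : ℂ) - V' k‖ ^ 2
          = (w k * ‖(V (t + h) k - V t k) / (h : ℂ) - V' k‖ ^ 2) / w k := by
            field_simp
        _ ≤ S h / w k := by gcongr
    · simpa using hS0.div_const (w k)
  have hnrm : Tendsto (fun h : ℝ => ‖(V (t + h) k - V t k) / (h : ℂ) - V' k‖)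
      (𝓝[≠] (0:ℝ)) (𝓝 0) := by
    have := hsq.sqrt
    simpa [Real.sqrt_sq (norm_nonneg _)] using this
  have : Tendsto (fun h : ℝ => (V (t + h) k - V t k) / (h : ℂ)) (𝓝[≠] (0:ℝ)) (𝓝 (V' k)) :=
    tendsto_iff_norm_sub_tendsto_zero.2 hnrm
  refine this.congr fun h => ?_
  simp [div_eq_inv_mul, Complex.real_smul, Complex.ofReal_inv]

/-- Time derivative of the coefficients of `homCoef`. -/
noncomputable def hcD (n : ℕ) (m : (Fin n → ℤ) → ℝ)
    (fh gh : (Fin n → ℤ) → ℂ) (t : ℝ) (k : Fin n → ℤ) : ℂ :=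
  if k = 0 then gh 0
  else fh k * ((-(Real.sqrt (-m k) * Real.sin (Real.sqrt (-m k) * t))) : ℝ) +
    gh k * ((Real.cos (Real.sqrt (-m k) * t)) : ℝ)

lemma hc_zero (n m fh gh k) : homCoef n m fh gh 0 k = fh k := by
  unfold homCoef
  split <;> simp_all

lemma hcD_zero (n m fh gh k) : hcD n m fh gh 0 k = gh k := by
  unfold hcD
  split <;> simp_all

lemma cos_mul_hasDerivAt (a t : ℝ) :
    HasDerivAt (fun t : ℝ => ((Real.cos (a * t) : ℝ) : ℂ))
      ((-(a * Real.sin (a * t)) : ℝ) : ℂ) t := by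
  have h1 : HasDerivAt (fun t : ℝ => a * t) a t := by
    simpa using (hasDerivAt_id t).const_mul a
  have := (Real.hasDerivAt_cos (a * t)).comp t h1
  have := this.ofReal_comp
  exact this.congr_deriv (by push_cast; ring)

lemma sin_mul_hasDerivAt (a t : ℝ) :
    HasDerivAt (fun t : ℝ => ((Real.sin (a * t) : ℝ) : ℂ))
      ((a * Real.cos (a * t) : ℝ) : ℂ) t := by
  have h1 : HasDerivAt (fun t : ℝ => a * t) a t := by
    simpa using (hasDerivAt_id t).const_mul a
  have := ((Real.hasDerivAt_sin (a * t)).comp t h1).ofReal_comp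
  exact this.congr_deriv (by push_cast; ring)

lemma hc_hasDerivAt (n) (m : (Fin n → ℤ) → ℝ)
    (hmneg : ∀ k : Fin n → ℤ, k ≠ 0 → m k < 0) (fh gh) (t : ℝ) (k : Fin n → ℤ) :
    HasDerivAt (fun s => homCoef n m fh gh s k) (hcD n m fh gh t k) t := by
  by_cases hk : k = 0
  · simp only [homCoef, hcD, hk, if_true]
    have : HasDerivAt (fun s : ℝ => ((s : ℝ) : ℂ)) 1 t := by
      exact Complex.ofRealCLM.hasDerivAt (x := t)
    simpa using ((this.const_mul (gh 0)).const_add (fh 0))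
  · simp only [homCoef, hcD, hk, if_false]
    set a := Real.sqrt (-m k)
    have hapos : 0 < a := Real.sqrt_pos.2 (by linarith [hmneg k hk])
    have h1 := (cos_mul_hasDerivAt a t).const_mul (fh k)
    have h2 := (sin_mul_hasDerivAt a t).const_mul (gh k)
    have h2' : HasDerivAt (fun s : ℝ => gh k * ((Real.sin (a * s) / a : ℝ) : ℂ))
        (gh k * ((Real.cos (a * t)) : ℝ)) t := by
      have := h2.div_const (a : ℂ)
      have e : ∀ s : ℝ, gh k * ((Real.sin (a * s) / a : ℝ) : ℂ)
          = gh k * ((Real.sin (a * s) : ℝ) : ℂ) / (a : ℂ) := by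
        intro s; push_cast; ring
      rw [funext e]
      refine this.congr_deriv ?_
      have ha' : (a : ℂ) ≠ 0 := by exact_mod_cast hapos.ne'
      field_simp
      push_cast; ring
    exact h1.add h2'

lemma hcD_hasDerivAt (n) (m : (Fin n → ℤ) → ℝ) (hm0 : m 0 = 0)
    (hmneg : ∀ k : Fin n → ℤ, k ≠ 0 → m k < 0) (fh gh) (t : ℝ) (k : Fin n → ℤ) :
    HasDerivAt (fun s => hcD n m fh gh s k) ((m k : ℂ) * homCoef n m fh gh t k) t := by
  by_cases hk : k = 0
  · simp only [hcD, homCoef, hk, if_true, hm0]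
    simpa using (hasDerivAt_const t (gh 0))
  · simp only [hcD, homCoef, hk, if_false]
    set a := Real.sqrt (-m k) with ha
    have hma : a ^ 2 = -m k := Real.sq_sqrt (by linarith [hmneg k hk])
    have hapos : 0 < a := Real.sqrt_pos.2 (by linarith [hmneg k hk])
    have h1 : HasDerivAt (fun s : ℝ => fh k * ((-(a * Real.sin (a * s)) : ℝ) : ℂ))
        (fh k * ((-(a * (a * Real.cos (a * t)))) : ℝ)) t := by
      have h := ((sin_mul_hasDerivAt a t).const_mul (a : ℂ)).neg.const_mul (fh k)
      have e1 : (fun s : ℝ => fh k * ((-(a * Real.sin (a * s)) : ℝ) : ℂ))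
          = fun s : ℝ => fh k * -((a : ℂ) * ((Real.sin (a * s) : ℝ) : ℂ)) := by
        funext s; push_cast; ring
      rw [e1]
      refine h.congr_deriv ?_
      push_cast; ring
    have h2 := (cos_mul_hasDerivAt a t).const_mul (gh k)
    have := h1.add h2
    refine this.congr_deriv ?_
    have hane : (a : ℂ) ≠ 0 := by exact_mod_cast hapos.ne'
    have hm : ((m k : ℝ) : ℂ) = -(a : ℂ) ^ 2 := by
      have h5 : m k = -(a ^ 2) := by linarith
      rw [h5]; push_cast; ring
    push_cast
    rw [hm]
    field_simp
    ring

lemma normSq_hasDerivAt {f : ℝ → ℂ} {d : ℂ} {t : ℝ} (hf : HasDerivAt f d t) :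
    HasDerivAt (fun s => Complex.normSq (f s))
      (2 * (f t).re * d.re + 2 * (f t).im * d.im) t := by
  have hre : HasDerivAt (fun s => (f s).re) d.re t :=
    Complex.reCLM.hasFDerivAt.comp_hasDerivAt t hf
  have him : HasDerivAt (fun s => (f s).im) d.im t :=
    Complex.imCLM.hasFDerivAt.comp_hasDerivAt t hf
  have := ((hre.mul hre).add (him.mul him))
  have e : (fun s => Complex.normSq (f s)) = fun s => (f s).re * (f s).re + (f s).im * (f s).im := by
    funext s; rw [Complex.normSq_apply]
  rw [e]
  exact this.congr_deriv (by ring)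

/-- Uniqueness of the solution of the scalar ODE `v'' = c v` (`c ≤ 0`)
on `[0, ∞)` with prescribed data at `0`. -/
lemma ode_unique {c : ℝ} (hcle : c ≤ 0) {v v₁ v₂ u u₁ : ℝ → ℂ}
    (hv : ∀ t : ℝ, 0 ≤ t → HasDerivAt v (v₁ t) t)
    (hv₁ : ∀ t : ℝ, 0 ≤ t → HasDerivAt v₁ (v₂ t) t)
    (hv₂ : ∀ t : ℝ, 0 < t → v₂ t = (c : ℂ) * v t)
    (hu : ∀ t : ℝ, HasDerivAt u (u₁ t) t)
    (hu₁ : ∀ t : ℝ, HasDerivAt u₁ ((c : ℂ) * u t) t)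
    (h0 : v 0 = u 0) (h1 : v₁ 0 = u₁ 0) :
    ∀ t : ℝ, 0 ≤ t → v t = u t := by
  set w : ℝ → ℂ := fun t => v t - u t with hw_def
  set w₁ : ℝ → ℂ := fun t => v₁ t - u₁ t with hw₁_def
  have hw : ∀ t : ℝ, 0 ≤ t → HasDerivAt w (w₁ t) t := fun t ht => (hv t ht).sub (hu t)
  have hw₁ : ∀ t : ℝ, 0 < t → HasDerivAt w₁ ((c : ℂ) * w t) t := by
    intro t ht
    have := (hv₁ t ht.le).sub (hu₁ t)
    rw [hv₂ t ht] at this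
    refine this.congr_deriv ?_
    simp only [hw_def]; ring
  have hw₁0 : ∀ t : ℝ, 0 ≤ t → HasDerivAt w₁ (v₂ t - (c : ℂ) * u t) t :=
    fun t ht => (hv₁ t ht).sub (hu₁ t)
  set E : ℝ → ℝ := fun t => Complex.normSq (w₁ t) + (-c) * Complex.normSq (w t) with hE_def
  have hE0 : E 0 = 0 := by
    simp only [hE_def, hw_def, hw₁_def, h0, h1, sub_self, Complex.normSq_zero]
    ring
  have hEcont : ∀ t : ℝ, 0 ≤ t → ContinuousAt E t := by
    intro t ht
    have c1 := (hw t ht).continuousAt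
    have c2 := (hw₁0 t ht).continuousAt
    exact ((Complex.continuous_normSq.continuousAt.comp c2).add
      (continuousAt_const.mul (Complex.continuous_normSq.continuousAt.comp c1)))
  have hE' : ∀ t : ℝ, 0 < t → HasDerivAt E 0 t := by
    intro t ht
    have d1 := normSq_hasDerivAt (hw₁ t ht)
    have d2 := normSq_hasDerivAt (hw t ht.le)
    have := d1.add ((d2).const_mul (-c))
    refine this.congr_deriv ?_
    have hre : ((c : ℂ) * w t).re = c * (w t).re := by
      simp [Complex.mul_re]
    have him : ((c : ℂ) * w t).im = c * (w t).im := by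
      simp [Complex.mul_im]
    rw [hre, him]
    ring
  have hEzero : ∀ t : ℝ, 0 ≤ t → E t = 0 := by
    intro t ht
    rcases eq_or_lt_of_le ht with rfl | htpos
    · exact hE0
    have hconst : ∀ ε : ℝ, 0 < ε → ε ≤ t → E t = E ε := by
      intro ε hε hεt
      have hcont : ContinuousOn E (Set.Icc ε t) := fun x hx =>
        (hEcont x (le_trans hε.le hx.1)).continuousWithinAt
      have hderiv : ∀ x ∈ Set.Ico ε t, HasDerivWithinAt E 0 (Set.Ici x) x := fun x hx =>
        (hE' x (lt_of_lt_of_le hε hx.1)).hasDerivWithinAt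
      exact constant_of_has_deriv_right_zero hcont hderiv t (Set.right_mem_Icc.2 hεt)
    have hlim : Tendsto E (𝓝[>] (0 : ℝ)) (𝓝 (E 0)) :=
      ((hEcont 0 le_rfl).continuousWithinAt).tendsto
    have hlim2 : Tendsto E (𝓝[>] (0 : ℝ)) (𝓝 (E t)) := by
      have hmem : Set.Ioc (0 : ℝ) t ∈ 𝓝[>] (0 : ℝ) := Ioc_mem_nhdsGT_of_mem ⟨le_rfl, htpos⟩
      refine Tendsto.congr' ?_ tendsto_const_nhds
      filter_upwards [hmem] with x hx
      exact hconst x hx.1 hx.2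
    rw [hE0] at hlim
    exact tendsto_nhds_unique hlim2 hlim
  have hw₁zero : ∀ t : ℝ, 0 ≤ t → w₁ t = 0 := by
    intro t ht
    have h := hEzero t ht
    have h1' : 0 ≤ Complex.normSq (w₁ t) := Complex.normSq_nonneg _
    have h2' : 0 ≤ (-c) * Complex.normSq (w t) :=
      mul_nonneg (by linarith) (Complex.normSq_nonneg _)
    have : Complex.normSq (w₁ t) = 0 := by simp only [hE_def] at h; linarith
    exact Complex.normSq_eq_zero.1 this
  intro t ht
  rcases eq_or_lt_of_le ht with rfl | htpos
  · exact h0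
  have hcont : ContinuousOn w (Set.Icc 0 t) := fun x hx =>
    (hw x hx.1).continuousAt.continuousWithinAt
  have hderiv : ∀ x ∈ Set.Ico 0 t, HasDerivWithinAt w 0 (Set.Ici x) x := by
    intro x hx
    have := hw x hx.1
    rw [hw₁zero x hx.1] at this
    exact this.hasDerivWithinAt
  have := constant_of_has_deriv_right_zero hcont hderiv t (Set.right_mem_Icc.2 ht)
  have hw0 : w 0 = 0 := sub_eq_zero.2 h0
  rw [hw0] at this
  exact sub_eq_zero.1 this

/-- The Fourier series `U(t)` solves the abstract wave equation
`U'' = L U`, `U(0) = f`, `U'(0) = g` in `H^q(Tⁿ)`, and it is the unique such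
solution among twice Gateaux-differentiable `H^q`-valued maps. -/
theorem stmt19 (n : ℕ) (hn : 1 ≤ n) (q s₁ s₂ : ℝ)
    (m : (Fin n → ℤ) → ℝ) (hm0 : m 0 = 0)
    (hmneg : ∀ k : Fin n → ℤ, k ≠ 0 → m k < 0)
    (fh gh : (Fin n → ℤ) → ℂ)
    (hf : Summable (fun k : Fin n → ℤ => (1 + knrm n k ^ 2) ^ s₁ * ‖fh k‖ ^ 2))
    (hg : Summable (fun k : Fin n → ℤ => (1 + knrm n k ^ 2) ^ s₂ * ‖gh k‖ ^ 2))
    (U : ℝ → (Fin n → ℤ) → ℂ)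
    (hUdef : ∀ t : ℝ, 0 ≤ t → ∀ k, U t k = homCoef n m fh gh t k)
    (hUsum : ∀ t : ℝ, 0 ≤ t →
      Summable (fun k : Fin n → ℤ => (1 + knrm n k ^ 2) ^ q * ‖U t k‖ ^ 2))
    (hUdiff : ∃ U₁ U₂ : ℝ → (Fin n → ℤ) → ℂ,
      (∀ t : ℝ, 0 ≤ t →
        GateauxDerivAt (Fin n → ℤ) (fun k => (1 + knrm n k ^ 2) ^ q) U (U₁ t) t) ∧
      (∀ t : ℝ, 0 ≤ t →
        GateauxDerivAt (Fin n → ℤ) (fun k => (1 + knrm n k ^ 2) ^ q) U₁ (U₂ t) t)) :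
    -- (i) `U` solves the equation with the given initial data:
    (∀ U₁ U₂ : ℝ → (Fin n → ℤ) → ℂ,
      (∀ t : ℝ, 0 ≤ t →
        GateauxDerivAt (Fin n → ℤ) (fun k => (1 + knrm n k ^ 2) ^ q) U (U₁ t) t) →
      (∀ t : ℝ, 0 ≤ t →
        GateauxDerivAt (Fin n → ℤ) (fun k => (1 + knrm n k ^ 2) ^ q) U₁ (U₂ t) t) →
      ((∀ t : ℝ, 0 < t → ∀ k, U₂ t k = (m k : ℂ) * U t k) ∧
        (∀ k, U 0 k = fh k) ∧ (∀ k, U₁ 0 k = gh k))) ∧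
    -- (ii) uniqueness among twice Gateaux-differentiable `H^q`-valued maps:
    (∀ V V₁ V₂ : ℝ → (Fin n → ℤ) → ℂ,
      (∀ t : ℝ, 0 ≤ t →
        Summable (fun k : Fin n → ℤ => (1 + knrm n k ^ 2) ^ q * ‖V t k‖ ^ 2)) →
      (∀ t : ℝ, 0 ≤ t →
        GateauxDerivAt (Fin n → ℤ) (fun k => (1 + knrm n k ^ 2) ^ q) V (V₁ t) t) →
      (∀ t : ℝ, 0 ≤ t →
        GateauxDerivAt (Fin n → ℤ) (fun k => (1 + knrm n k ^ 2) ^ q) V₁ (V₂ t) t) →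
      (∀ t : ℝ, 0 < t → ∀ k, V₂ t k = (m k : ℂ) * V t k) →
      (∀ k, V 0 k = fh k) → (∀ k, V₁ 0 k = gh k) →
      ∀ t : ℝ, 0 ≤ t → ∀ k, V t k = U t k) := by
  have hwpos : ∀ k : Fin n → ℤ, 0 < (1 + knrm n k ^ 2) ^ q :=
    fun k => Real.rpow_pos_of_pos (by positivity) q
  have hmle : ∀ k : Fin n → ℤ, m k ≤ 0 := by
    intro k
    by_cases hk : k = 0
    · rw [hk, hm0]
    · exact (hmneg k hk).le
  constructor
  · -- part (i)
    intro U₁ U₂ hU₁ hU₂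
    have pU : ∀ t : ℝ, 0 ≤ t → ∀ k, HasDerivAt (fun s => U s k) (U₁ t k) t :=
      fun t ht k => gateaux_pointwise hwpos (hU₁ t ht) k
    have pU₁ : ∀ t : ℝ, 0 ≤ t → ∀ k, HasDerivAt (fun s => U₁ s k) (U₂ t k) t :=
      fun t ht k => gateaux_pointwise hwpos (hU₂ t ht) k
    -- U₁ agrees with hcD on (0, ∞)
    have eq₁ : ∀ t : ℝ, 0 < t → ∀ k, U₁ t k = hcD n m fh gh t k := by
      intro t ht k
      have hEq : (fun s => U s k) =ᶠ[𝓝 t] (fun s => homCoef n m fh gh s k) := by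
        filter_upwards [Ioi_mem_nhds ht] with s hs
        exact hUdef s (le_of_lt hs) k
      have h1 : HasDerivAt (fun s => U s k) (hcD n m fh gh t k) t :=
        (hc_hasDerivAt n m hmneg fh gh t k).congr_of_eventuallyEq hEq
      exact (pU t ht.le k).unique h1
    refine ⟨?_, ?_, ?_⟩
    · intro t ht k
      have hEq : (fun s => U₁ s k) =ᶠ[𝓝 t] (fun s => hcD n m fh gh s k) := by
        filter_upwards [Ioi_mem_nhds ht] with s hs
        exact eq₁ s hs k
      have h1 : HasDerivAt (fun s => U₁ s k) ((m k : ℂ) * homCoef n m fh gh t k) t :=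
        (hcD_hasDerivAt n m hm0 hmneg fh gh t k).congr_of_eventuallyEq hEq
      have := (pU₁ t ht.le k).unique h1
      rw [this, hUdef t ht.le k]
    · intro k
      rw [hUdef 0 le_rfl k, hc_zero]
    · intro k
      have h1 := (pU 0 le_rfl k).tendsto_slope_zero_right
      have h2 := (hc_hasDerivAt n m hmneg fh gh 0 k).tendsto_slope_zero_right
      have h2' : Tendsto (fun h : ℝ => h⁻¹ • (U (0 + h) k - U 0 k)) (𝓝[>] (0:ℝ))
          (𝓝 (hcD n m fh gh 0 k)) := by
        refine h2.congr' ?_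
        filter_upwards [self_mem_nhdsWithin] with h (hh : h ∈ Set.Ioi (0:ℝ))
        rw [hUdef (0 + h) (by simpa using (le_of_lt hh)) k, hUdef 0 le_rfl k]
      have := tendsto_nhds_unique h1 h2'
      rw [this, hcD_zero]
  · -- part (ii)
    intro V V₁ V₂ hVsum hV hV₁ hV₂ hV0 hV₁0 t ht k
    have pV : ∀ t : ℝ, 0 ≤ t → HasDerivAt (fun s => V s k) (V₁ t k) t :=
      fun t ht => gateaux_pointwise hwpos (hV t ht) k
    have pV₁ : ∀ t : ℝ, 0 ≤ t → HasDerivAt (fun s => V₁ s k) (V₂ t k) t :=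
      fun t ht => gateaux_pointwise hwpos (hV₁ t ht) k
    have key := ode_unique (hmle k) pV pV₁ (fun s hs => hV₂ s hs k)
      (hc_hasDerivAt n m hmneg fh gh · k) (hcD_hasDerivAt n m hm0 hmneg fh gh · k)
      (by rw [hV0 k, hc_zero]) (by rw [hV₁0 k, hcD_zero]) t ht
    rw [key, hUdef t ht k]
end
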